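/- arXiv:2512.22844 — 2 statements merged into one kernel-verified Lean document; each statement's English description precedes it below -/
import Mathlib

section
/- There exists a constant C > 0 such that for every integer m ≥ 1 and every integer n with m + n even, and for every real number z ∈ [n - 2, n + 2], one has |G(m, n) − 2 p_m(z)| ≤ C/m, where p_m(z) = (2πm)^{-1/2} exp(-z²/(2m)). -/
noncomputable section

/-- The heat kernel `p_t(x) = (2πt)^{-1/2} exp(-x²/(2t))`. -/
def heatK (t x : ℝ) : ℝ := Real.exp (-x ^ 2 / (2 * t)) / Real.sqrt (2 * Real.pi * t)

/-- `G m n = P(S_m = n)`, the probability mass function of the simple random walk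
`S_m = Z_1 + … + Z_m` with i.i.d. steps `Z_i` uniform on `{-1, 1}`. -/
def rwG (m : ℕ) (n : ℤ) : ℝ :=
  ((Finset.univ.filter fun f : Fin m → Bool =>
      (∑ i, if f i then (1 : ℤ) else -1) = n).card : ℝ) / 2 ^ m

open Real Nat

lemma sum_pm (m : ℕ) (f : Fin m → Bool) :
    (∑ i, if f i then (1:ℤ) else -1) = 2 * ((Finset.univ.filter fun i => f i).card : ℤ) - m := by
  have : ∀ i, (if f i then (1:ℤ) else -1) = (if f i then (2:ℤ) else 0) - 1 := by
    intro i; by_cases h : f i <;> simp [h]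
  simp only [this, Finset.sum_sub_distrib, Finset.sum_ite, Finset.sum_const, Finset.sum_const_zero,
    Finset.card_univ, Fintype.card_fin, smul_eq_mul, add_zero]
  ring

lemma count_trues (m k : ℕ) :
    (Finset.univ.filter fun f : Fin m → Bool => (Finset.univ.filter fun i => f i).card = k).card
      = m.choose k := by
  have h : ((Finset.univ : Finset (Fin m)).powersetCard k).card = m.choose k := by
    rw [Finset.card_powersetCard, Finset.card_univ, Fintype.card_fin]
  rw [← h]
  apply Finset.card_bij (fun f _ => Finset.univ.filter fun i => f i)
  · intro f hf
    simp only [Finset.mem_filter, Finset.mem_univ, true_and] at hf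
    simp [Finset.mem_powersetCard, hf]
  · intro f hf g hg hfg
    funext i
    have h2 := Finset.ext_iff.mp hfg i
    simp only [Finset.mem_filter, Finset.mem_univ, true_and] at h2
    cases hfi : f i <;> cases hgi : g i <;> simp_all
  · intro s hs
    refine ⟨fun i => i ∈ s, by simp [Finset.mem_powersetCard] at hs; simp [hs], ?_⟩
    ext i
    simp

lemma rwG_eq (m k : ℕ) : rwG m (2*(k:ℤ) - m) = (m.choose k : ℝ) / 2^m := by
  unfold rwG
  have h : (Finset.univ.filter fun f : Fin m → Bool =>
      (∑ i, if f i then (1 : ℤ) else -1) = 2*(k:ℤ) - m)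
      = Finset.univ.filter fun f : Fin m → Bool => (Finset.univ.filter fun i => f i).card = k := by
    apply Finset.filter_congr
    intro f _
    rw [sum_pm]
    constructor
    · intro h; exact_mod_cast by omega
    · intro h; rw [h]
  rw [h, count_trues]

lemma rwG_out (m : ℕ) (n : ℤ) (h : (m:ℤ) < |n|) : rwG m n = 0 := by
  unfold rwG
  convert_to ((0:ℕ) : ℝ) / 2^m = 0
  · congr 2
    rw [Finset.card_eq_zero, Finset.filter_eq_empty_iff]
    intro f _
    rw [sum_pm]
    have h1 : (Finset.univ.filter fun i => f i).card ≤ m := by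
      simpa using Finset.card_filter_le Finset.univ (fun i => f i = true)
    rw [lt_abs] at h
    omega
  · simp

example (m : ℕ) (n : ℤ) (he : Even ((m:ℤ) + n)) (h1 : -(m:ℤ) ≤ n) (h2 : n ≤ m) :
    ∃ k : ℕ, k ≤ m ∧ (2*(k:ℤ) - m) = n := by
  obtain ⟨c, hc⟩ := he
  refine ⟨((m + n)/2).toNat, by omega, by omega⟩

lemma stirling_ge (j : ℕ) : Real.sqrt π ≤ Stirling.stirlingSeq (j+1) := by
  have h1 : Filter.Tendsto (fun n => Real.log (Stirling.stirlingSeq (n+1))) Filter.atTop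
      (nhds (Real.log (Real.sqrt π))) := by
    apply Filter.Tendsto.comp (Real.continuousAt_log (by positivity)).tendsto
    exact (Stirling.tendsto_stirlingSeq_sqrt_pi).comp (Filter.tendsto_add_atTop_nat 1)
  have h3 : Real.log (Real.sqrt π) ≤ Real.log (Stirling.stirlingSeq (j+1)) :=
    Stirling.log_stirlingSeq'_antitone.le_of_tendsto h1 j
  have := Real.exp_le_exp.mpr h3
  rwa [Real.exp_log (by positivity), Real.exp_log (Stirling.stirlingSeq'_pos j)] at this

lemma stirling_le (j : ℕ) :
    Stirling.stirlingSeq (j+1) ≤ Real.sqrt π * Real.exp (1/(2*((j:ℝ)+1))) := by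
  set g : ℕ → ℝ := fun n => Real.log (Stirling.stirlingSeq (n+1)) with hg
  set F : ℕ → ℝ := fun i => 1/(4*((j:ℝ)+i+1/2)) with hF
  have key : ∀ N : ℕ, g j - g (j + N) ≤ F 0 := by
    intro N
    have e1 : g j - g (j + N) = ∑ i ∈ Finset.range N, (g (j+i) - g (j+(i+1))) := by
      rw [Finset.sum_range_sub' (fun i => g (j+i))]

    have e2 : F 0 - F N = ∑ i ∈ Finset.range N, (F i - F (i+1)) := by
      rw [Finset.sum_range_sub' F]
    rw [e1]
    have hFN : 0 ≤ F N := by positivity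
    have hs : ∑ i ∈ Finset.range N, (g (j+i) - g (j+(i+1)))
        ≤ ∑ i ∈ Finset.range N, (F i - F (i+1)) := by
      apply Finset.sum_le_sum
      intro i _
      have h1 := Stirling.log_stirlingSeq_sub_log_stirlingSeq_succ (j+i+1)
      push_cast at h1
      set a : ℝ := (j:ℝ) + i with ha
      have ha0 : (0:ℝ) ≤ a := by positivity
      have hterm : g (j+i) - g (j+(i+1)) ≤ 1 / (4 * (a+1)^2) := by
        have : j + (i+1) = (j + i) + 1 := by ring
        rw [this]
        exact h1
      refine hterm.trans ?_
      have h2 : 1 / (4*(a+1)^2) ≤ 1/(4*(a+1/2)) - 1/(4*(a+3/2)) := by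
        rw [div_sub_div _ _ (by positivity) (by positivity),
          div_le_div_iff₀ (by positivity) (by positivity)]
        nlinarith [sq_nonneg a]
      refine h2.trans_eq ?_
      rw [hF]
      push_cast; rw [ha]
      ring_nf
    linarith [e2 ▸ hs]
  have hten : Filter.Tendsto (fun N : ℕ => g (j + N)) Filter.atTop
      (nhds (Real.log (Real.sqrt π))) := by
    have h0 : Filter.Tendsto (fun N : ℕ => j + N + 1) Filter.atTop Filter.atTop :=
      Filter.tendsto_atTop_mono (fun N => (Nat.le_add_left N j).trans (Nat.le_succ _)) Filter.tendsto_id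
    exact (Real.continuousAt_log (by positivity)).tendsto.comp
      (Stirling.tendsto_stirlingSeq_sqrt_pi.comp h0)
  have hlim : Filter.Tendsto (fun N => g j - g (j + N)) Filter.atTop
      (nhds (g j - Real.log (Real.sqrt π))) := Filter.Tendsto.const_sub _ hten
  have hle : g j - Real.log (Real.sqrt π) ≤ F 0 :=
    le_of_tendsto hlim (Filter.Eventually.of_forall key)
  have hF0 : F 0 ≤ 1/(2*((j:ℝ)+1)) := by
    rw [hF]
    simp only [Nat.cast_zero, add_zero]
    apply one_div_le_one_div_of_le (by positivity)
    nlinarith [Nat.cast_nonneg (α := ℝ) j]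
  have hgle : g j ≤ Real.log (Real.sqrt π) + 1/(2*((j:ℝ)+1)) := by linarith
  calc Stirling.stirlingSeq (j+1) = Real.exp (g j) := by
        rw [hg]; rw [Real.exp_log (Stirling.stirlingSeq'_pos j)]
    _ ≤ Real.exp (Real.log (Real.sqrt π) + 1/(2*((j:ℝ)+1))) := Real.exp_le_exp.mpr hgle
    _ = Real.sqrt π * Real.exp (1/(2*((j:ℝ)+1))) := by
        rw [Real.exp_add, Real.exp_log (by positivity)]

noncomputable def phi (x : ℝ) : ℝ := ((1+x)*Real.log (1+x) + (1-x)*Real.log (1-x))/2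

lemma phi_hasSum {x : ℝ} (h : |x| < 1) :
    HasSum (fun k : ℕ => (x^2)^(k+1) * (1/(2*(k:ℝ)+1) - 1/(2*(k:ℝ)+2))) (phi x) := by
  have hx2 : |x^2| < 1 := by
    rw [abs_of_nonneg (sq_nonneg x)]
    calc x^2 = |x|^2 := (sq_abs x).symm
      _ < 1 := by nlinarith [abs_nonneg x]
  have A := (Real.hasSum_log_sub_log_of_abs_lt_one h).mul_left (x/2)
  have B := (Real.hasSum_pow_div_log_of_abs_lt_one hx2).mul_left (1/2)
  have C := A.sub B
  have hfun : (fun k : ℕ => x/2 * (2 * (1/(2*(k:ℝ)+1)) * x^(2*k+1)) - 1/2 * ((x^2)^(k+1) / ((k:ℝ)+1)))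
      = fun k : ℕ => (x^2)^(k+1) * (1/(2*(k:ℝ)+1) - 1/(2*(k:ℝ)+2)) := by
    funext k
    have h1 : x^(2*k+1) * x = (x^2)^(k+1) := by
      rw [← pow_succ, ← pow_mul]
      ring_nf
    have e1 : x/2 * (2 * (1/(2*(k:ℝ)+1)) * x^(2*k+1)) = (x^2)^(k+1) * (1/(2*(k:ℝ)+1)) := by
      rw [← h1]; ring
    have e2 : 1/2 * ((x^2)^(k+1) / ((k:ℝ)+1)) = (x^2)^(k+1) * (1/(2*(k:ℝ)+2)) := by
      rw [mul_comm]
      rw [div_eq_mul_inv, mul_assoc]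
      congr 1
      rw [mul_one_div]
      rw [inv_eq_one_div, div_div]
      ring_nf
    rw [e1, e2]
    ring
  rw [hfun] at C
  have hval : x/2 * (Real.log (1+x) - Real.log (1-x)) - 1/2 * (-Real.log (1-x^2)) = phi x := by
    have hx1 : (0:ℝ) < 1 + x := by cases' abs_lt.mp h with h1 h2; linarith
    have hx2' : (0:ℝ) < 1 - x := by cases' abs_lt.mp h with h1 h2; linarith
    have : Real.log (1-x^2) = Real.log (1+x) + Real.log (1-x) := by
      rw [← Real.log_mul hx1.ne' hx2'.ne']
      ring_nf
    rw [this, phi]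
    ring
  rwa [hval] at C

lemma phi_ge {x : ℝ} (h : |x| < 1) : x^2/2 ≤ phi x := by
  have hs := phi_hasSum h
  have hterm : ∀ i : ℕ, i ∉ ({0} : Finset ℕ) →
      (0:ℝ) ≤ (x^2)^(i+1) * (1/(2*(i:ℝ)+1) - 1/(2*(i:ℝ)+2)) := by
    intro i _
    have : (0:ℝ) ≤ 1/(2*(i:ℝ)+1) - 1/(2*(i:ℝ)+2) := by
      rw [sub_nonneg]
      apply one_div_le_one_div_of_le (by positivity)
      linarith
    positivity
  have := le_hasSum hs 0 (fun i hi => hterm i (by simpa using hi))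
  calc x^2/2 = (x^2)^(0+1) * (1/(2*((0:ℕ):ℝ)+1) - 1/(2*((0:ℕ):ℝ)+2)) := by norm_num; ring
    _ ≤ phi x := this

lemma phi_le {x : ℝ} (h : x^2 ≤ 1/2) : phi x ≤ x^2/2 + 2*x^4 := by
  have habs : |x| < 1 := by
    rw [← Real.sqrt_one, ← Real.sqrt_sq_eq_abs]
    apply Real.sqrt_lt_sqrt (sq_nonneg x)
    linarith
  have hs := phi_hasSum habs
  have hgeo : HasSum (fun k : ℕ => x^2 * (x^2)^k) (x^2 * (1/(1-x^2))) := by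
    have := hasSum_geometric_of_lt_one (sq_nonneg x) (by nlinarith : x^2 < 1)
    simpa [one_div] using this.mul_left (x^2)
  have hone : HasSum (fun k : ℕ => if k = 0 then x^2/2 else (0:ℝ)) (x^2/2) := hasSum_ite_eq 0 _
  have hcomb := hgeo.sub hone
  have hle : phi x ≤ x^2 * (1/(1-x^2)) - x^2/2 := by
    apply hasSum_le _ hs hcomb
    intro k
    rcases Nat.eq_zero_or_pos k with hk | hk
    · subst hk
      norm_num
      ring_nf
      try linarith
    · rw [if_neg (Nat.pos_iff_ne_zero.mp hk)]
      have h1 : (x^2)^(k+1) * (1/(2*(k:ℝ)+1) - 1/(2*(k:ℝ)+2)) ≤ (x^2)^(k+1) * 1 := by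
        apply mul_le_mul_of_nonneg_left _ (by positivity)
        have h2 : (0:ℝ) ≤ 1/(2*(k:ℝ)+2) := by positivity
        have h3 : 1/(2*(k:ℝ)+1) ≤ 1 := by rw [div_le_one (by positivity)]; linarith
        linarith
      calc (x^2)^(k+1) * (1/(2*(k:ℝ)+1) - 1/(2*(k:ℝ)+2)) ≤ (x^2)^(k+1) * 1 := h1
        _ = x^2 * (x^2)^k - 0 := by rw [pow_succ]; ring
  have hx4 : x^4 * (x^2) ≤ x^4 * (1/2) := by
    apply mul_le_mul_of_nonneg_left h (by positivity)
  have : x^2 * (1/(1-x^2)) ≤ x^2 + 2*x^4 := by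
    rw [mul_one_div, div_le_iff₀ (by linarith)]
    nlinarith [hx4, sq_nonneg x, sq_nonneg (x^2)]
  linarith

lemma pow_ratio (m k : ℕ) (h1 : 1 ≤ k) (h2 : k < m) :
    ((m:ℝ)/Real.exp 1)^m / (((k:ℝ)/Real.exp 1)^k * ((((m-k:ℕ)):ℝ)/Real.exp 1)^(m-k) * 2^m)
      = Real.exp (-(m:ℝ) * phi ((2*(k:ℝ)-m)/m)) := by
  set l := m - k with hl
  have hkl : k + l = m := by omega
  set K := (k:ℝ) with hK
  set L := (l:ℝ) with hL
  have hKpos : (0:ℝ) < K := by rw [hK]; exact_mod_cast (by omega : 0 < k)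
  have hLpos : (0:ℝ) < L := by rw [hL]; exact_mod_cast by omega
  have hM : (m:ℝ) = K + L := by rw [hK, hL]; exact_mod_cast hkl.symm
  have hMpos : (0:ℝ) < (m:ℝ) := by rw [hM]; linarith
  set x := (2*K-(m:ℝ))/(m:ℝ) with hx
  have e1 : 1 + x = 2*K/(m:ℝ) := by rw [hx]; field_simp; ring
  have e2 : 1 - x = 2*L/(m:ℝ) := by rw [hx]; field_simp; linarith [hM]
  have l1 : Real.log (2*K/(m:ℝ)) = Real.log 2 + Real.log K - Real.log m := by
    rw [Real.log_div (by positivity) (by positivity), Real.log_mul (by norm_num) hKpos.ne']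
  have l2 : Real.log (2*L/(m:ℝ)) = Real.log 2 + Real.log L - Real.log m := by
    rw [Real.log_div (by positivity) (by positivity), Real.log_mul (by norm_num) hLpos.ne']
  have hphi : (m:ℝ) * phi x = K*(Real.log 2 + Real.log K - Real.log m)
      + L*(Real.log 2 + Real.log L - Real.log m) := by
    rw [phi, e1, e2, l1, l2]
    field_simp
  have hLHSpos : (0:ℝ) < ((m:ℝ)/Real.exp 1)^m / (((k:ℝ)/Real.exp 1)^k * ((L)/Real.exp 1)^l * 2^m) := by
    positivity
  rw [← Real.exp_log hLHSpos]
  congr 1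
  have hlog : ∀ (a : ℝ) (n : ℕ), 0 < a → Real.log ((a/Real.exp 1)^n) = n * (Real.log a - 1) := by
    intro a n ha
    rw [Real.log_pow, Real.log_div ha.ne' (Real.exp_pos 1).ne', Real.log_exp]
  rw [Real.log_div (by positivity) (by positivity),
    Real.log_mul (by positivity) (by positivity),
    Real.log_mul (by positivity) (by positivity),
    hlog _ _ hMpos, hlog _ _ hKpos, hlog _ _ hLpos, Real.log_pow]
  rw [neg_mul, hphi, hM, ← hK, ← hL]
  ring

lemma exp_le_two {x : ℝ} (h0 : 0 ≤ x) (h : x ≤ 1/2) : Real.exp x ≤ 2 := by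
  have h1 : 1 - x ≤ Real.exp (-x) := by have := Real.add_one_le_exp (-x); linarith
  have h2 : (1:ℝ)/2 ≤ Real.exp (-x) := by linarith
  have h3 : Real.exp x * Real.exp (-x) = 1 := by rw [← Real.exp_add]; simp
  nlinarith [Real.exp_pos x]

lemma exp_lb6 {u : ℝ} (hu : 0 ≤ u) : u^6/720 ≤ Real.exp u := by
  have h := Real.sum_le_exp_of_nonneg hu 7
  have h6 : u^6/720 ≤ ∑ i ∈ Finset.range 7, u^i/(i)! := by
    have := Finset.single_le_sum (f := fun i => u^i/(i)!)
      (fun i _ => by positivity) (Finset.self_mem_range_succ 6)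
    calc u^6/720 = u^6/(6)! := by norm_num [Nat.factorial]
      _ ≤ _ := this
  linarith

lemma sqrt4 : Real.sqrt 4 = 2 := by
  rw [show (4:ℝ) = 2^2 by norm_num]
  exact Real.sqrt_sq (by norm_num)

-- sqrt(2/(π m)) = 2 / sqrt(2 π m)

lemma sqrt_id (m : ℝ) (hm : 0 < m) : Real.sqrt (2/(π*m)) = 2 / Real.sqrt (2*π*m) := by
  have h1 : Real.sqrt (2/(π*m)) * Real.sqrt (2*π*m) = 2 := by
    rw [← Real.sqrt_mul (by positivity)]
    rw [show 2/(π*m)*(2*π*m) = 4 by field_simp; ring]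
    exact sqrt4
  have h2 : (0:ℝ) < Real.sqrt (2*π*m) := by positivity
  field_simp at h1 ⊢
  linarith [h1]

lemma S_ge (m k : ℕ) (h1 : 1 ≤ k) (h2 : k < m) :
    Real.sqrt (2/(π*(m:ℝ))) ≤
      Real.sqrt (2*π*m) / (Real.sqrt (2*π*k) * Real.sqrt (2*π*((m-k:ℕ):ℝ))) := by
  set l := m - k with hl
  have hkl : k + l = m := by omega
  have hK : (0:ℝ) < (k:ℝ) := by exact_mod_cast (by omega : 0 < k)
  have hL : (0:ℝ) < (l:ℝ) := by exact_mod_cast (by omega : 0 < l)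
  have hM : (0:ℝ) < (m:ℝ) := by exact_mod_cast (by omega : 0 < m)
  have hprod : Real.sqrt (2*π*(k:ℝ)) * Real.sqrt (2*π*(l:ℝ)) = Real.sqrt ((2*π*k)*(2*π*l)) :=
    (Real.sqrt_mul (by positivity) _).symm
  have hMkl : (m:ℝ) = (k:ℝ) + (l:ℝ) := by exact_mod_cast hkl.symm
  have hkey : 4*(k:ℝ)*(l:ℝ) ≤ (m:ℝ)^2 := by nlinarith [sq_nonneg ((k:ℝ) - (l:ℝ))]
  have hπ : (0:ℝ) < π := Real.pi_pos
  rw [hprod, le_div_iff₀ (by positivity), ← Real.sqrt_mul (by positivity)]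
  apply Real.sqrt_le_sqrt
  rw [div_mul_eq_mul_div, div_le_iff₀ (by positivity)]
  nlinarith [mul_le_mul_of_nonneg_right hkey (le_of_lt (by positivity : (0:ℝ) < 2*π^2))]

lemma S_le (m k : ℕ) (h1 : 1 ≤ k) (h2 : k < m) (hx : ((2*(k:ℝ)-m)/m)^2 ≤ 1/2) :
    Real.sqrt (2*π*m) / (Real.sqrt (2*π*k) * Real.sqrt (2*π*((m-k:ℕ):ℝ)))
      ≤ Real.sqrt (2/(π*(m:ℝ))) * Real.exp (((2*(k:ℝ)-m)/m)^2) := by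
  set l := m - k with hl
  have hkl : k + l = m := by omega
  have hK : (0:ℝ) < (k:ℝ) := by exact_mod_cast (by omega : 0 < k)
  have hL : (0:ℝ) < (l:ℝ) := by exact_mod_cast (by omega : 0 < l)
  have hM : (0:ℝ) < (m:ℝ) := by exact_mod_cast (by omega : 0 < m)
  have hMkl : (m:ℝ) = (k:ℝ) + (l:ℝ) := by exact_mod_cast hkl.symm
  set x := (2*(k:ℝ)-m)/m with hxdef
  have hx2 : x^2 = ((k:ℝ)-(l:ℝ))^2/(m:ℝ)^2 := by
    rw [hxdef, div_pow]
    congr 1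
    rw [hMkl]; ring
  have h4kl : 4*(k:ℝ)*(l:ℝ) = (m:ℝ)^2*(1 - x^2) := by
    rw [hx2, hMkl]
    field_simp
    ring
  have hexp : Real.exp (x^2) = Real.sqrt (Real.exp (2*x^2)) := by
    rw [show 2*x^2 = x^2 + x^2 by ring, Real.exp_add, Real.sqrt_mul_self (Real.exp_pos _).le]
  have hprod : Real.sqrt (2*π*(k:ℝ)) * Real.sqrt (2*π*(l:ℝ)) = Real.sqrt ((2*π*k)*(2*π*l)) :=
    (Real.sqrt_mul (by positivity) _).symm
  have hπ : (0:ℝ) < π := Real.pi_pos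
  have he : 1 + 2*x^2 ≤ Real.exp (2*x^2) := by
    have := Real.add_one_le_exp (2*x^2)
    linarith
  have hkey : (m:ℝ)^2 ≤ 4*(k:ℝ)*(l:ℝ) * Real.exp (2*x^2) := by
    rw [h4kl]
    have hx0 : 0 ≤ x^2 := sq_nonneg x
    have : (1:ℝ) ≤ (1 - x^2) * Real.exp (2*x^2) := by
      calc (1:ℝ) ≤ (1 - x^2) * (1 + 2*x^2) := by nlinarith
        _ ≤ (1 - x^2) * Real.exp (2*x^2) := by
            apply mul_le_mul_of_nonneg_left he (by nlinarith)
    nlinarith [sq_nonneg (m:ℝ)]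
  rw [hprod, hexp, div_le_iff₀ (by positivity), ← Real.sqrt_mul (by positivity),
    ← Real.sqrt_mul (by positivity)]
  apply Real.sqrt_le_sqrt
  calc 2*π*(m:ℝ) = (m:ℝ)^2 * (2*π/(m:ℝ)) := by field_simp
    _ ≤ (4*(k:ℝ)*(l:ℝ) * Real.exp (2*x^2)) * (2*π/(m:ℝ)) := by
        apply mul_le_mul_of_nonneg_right hkey (by positivity)
    _ = 2/(π*(m:ℝ)) * Real.exp (2*x^2) * ((2*π*(k:ℝ))*(2*π*(l:ℝ))) := by
        field_simp
        ring

lemma sqrt_two_pi_eq (j : ℕ) : Real.sqrt (2*π*j) = Real.sqrt π * Real.sqrt (2*j) := by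
  rw [← Real.sqrt_mul Real.pi_pos.le]
  congr 1
  ring

lemma fact_bounds (j : ℕ) (hj : 1 ≤ j) :
    Real.sqrt (2*π*j) * ((j:ℝ)/Real.exp 1)^j ≤ (j ! : ℝ) ∧
    (j ! : ℝ) ≤ Real.sqrt (2*π*j) * ((j:ℝ)/Real.exp 1)^j * Real.exp (1/(2*(j:ℝ))) := by
  obtain ⟨i, rfl⟩ : ∃ i, j = i + 1 := ⟨j-1, by omega⟩
  have hd : (0:ℝ) < Real.sqrt (2*(i+1:ℕ)) * (((i+1:ℕ):ℝ)/Real.exp 1)^(i+1) := by positivity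
  have hs : Stirling.stirlingSeq (i+1)
      = ((i+1)! : ℝ) / (Real.sqrt (2*(i+1:ℕ)) * (((i+1:ℕ):ℝ)/Real.exp 1)^(i+1)) := by
    rw [Stirling.stirlingSeq]
  have hfact : ((i+1)! : ℝ) = Stirling.stirlingSeq (i+1)
      * (Real.sqrt (2*(i+1:ℕ)) * (((i+1:ℕ):ℝ)/Real.exp 1)^(i+1)) := by
    rw [hs, div_mul_cancel₀ _ hd.ne']
  constructor
  · rw [hfact, sqrt_two_pi_eq]
    have := stirling_ge i
    calc Real.sqrt π * Real.sqrt (2*((i+1:ℕ):ℝ)) * (((i+1:ℕ):ℝ)/Real.exp 1)^(i+1)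
        ≤ Stirling.stirlingSeq (i+1) * (Real.sqrt (2*((i+1:ℕ):ℝ)) * (((i+1:ℕ):ℝ)/Real.exp 1)^(i+1)) := by
          rw [← mul_assoc]
          exact mul_le_mul_of_nonneg_right (mul_le_mul_of_nonneg_right this (by positivity)) (by positivity)
      _ = _ := rfl
  · rw [hfact, sqrt_two_pi_eq]
    have h2 := stirling_le i
    have hcast : ((i+1:ℕ):ℝ) = (i:ℝ)+1 := by push_cast; ring
    calc Stirling.stirlingSeq (i+1) * (Real.sqrt (2*((i+1:ℕ):ℝ)) * (((i+1:ℕ):ℝ)/Real.exp 1)^(i+1))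
        ≤ (Real.sqrt π * Real.exp (1/(2*((i:ℝ)+1)))) * (Real.sqrt (2*((i+1:ℕ):ℝ)) * (((i+1:ℕ):ℝ)/Real.exp 1)^(i+1)) :=
          mul_le_mul_of_nonneg_right h2 (by positivity)
      _ = Real.sqrt π * Real.sqrt (2*((i+1:ℕ):ℝ)) * (((i+1:ℕ):ℝ)/Real.exp 1)^(i+1) * Real.exp (1/(2*((i+1:ℕ):ℝ))) := by
          rw [hcast]
          ring

lemma choose_bounds (m k : ℕ) (h1 : 1 ≤ k) (h2 : k < m) :
    (m.choose k : ℝ)/2^m ≤ Real.exp (1/(2*(m:ℝ)))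
        * (Real.sqrt (2*π*m) / (Real.sqrt (2*π*k) * Real.sqrt (2*π*((m-k:ℕ):ℝ))))
        * Real.exp (-(m:ℝ) * phi ((2*(k:ℝ)-m)/m)) ∧
    (Real.sqrt (2*π*m) / (Real.sqrt (2*π*k) * Real.sqrt (2*π*((m-k:ℕ):ℝ))))
        * Real.exp (-(m:ℝ) * phi ((2*(k:ℝ)-m)/m))
        * Real.exp (-(1/(2*(k:ℝ)) + 1/(2*((m-k:ℕ):ℝ))))
      ≤ (m.choose k : ℝ)/2^m := by
  set l := m - k with hldef
  have hl1 : 1 ≤ l := by omega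
  have hm1 : 1 ≤ m := by omega
  have hLpos : (0:ℝ) < (l:ℝ) := by exact_mod_cast (by omega : 0 < l)
  have hKpos : (0:ℝ) < (k:ℝ) := by exact_mod_cast (by omega : 0 < k)
  have hMpos : (0:ℝ) < (m:ℝ) := by exact_mod_cast (by omega : 0 < m)
  have hchoose : (m.choose k : ℝ) = (m ! : ℝ) / ((k ! : ℝ) * (l ! : ℝ)) := by
    have := Nat.choose_mul_factorial_mul_factorial (le_of_lt h2)
    rw [eq_div_iff (by positivity)]
    rw [hldef]
    exact_mod_cast by rw [← this]; ring
  obtain ⟨hMf1, hMf2⟩ := fact_bounds m hm1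
  obtain ⟨hKf1, hKf2⟩ := fact_bounds k h1
  obtain ⟨hLf1, hLf2⟩ := fact_bounds l hl1
  set SM := Real.sqrt (2*π*(m:ℝ)) with hSM
  set SK := Real.sqrt (2*π*(k:ℝ)) with hSK
  set SL := Real.sqrt (2*π*(l:ℝ)) with hSL
  set PM := ((m:ℝ)/Real.exp 1)^m with hPM
  set PK := ((k:ℝ)/Real.exp 1)^k with hPK
  set PL := ((l:ℝ)/Real.exp 1)^l with hPL
  have hSMpos : 0 < SM := by rw [hSM]; positivity
  have hSKpos : 0 < SK := by rw [hSK]; positivity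
  have hSLpos : 0 < SL := by rw [hSL]; positivity
  have hPMpos : 0 < PM := by rw [hPM]; positivity
  have hPKpos : 0 < PK := by rw [hPK]; positivity
  have hPLpos : 0 < PL := by rw [hPL]; positivity
  have hratio := pow_ratio m k h1 h2
  rw [← hldef] at hratio
  rw [← hPM, ← hPK, ← hPL] at hratio
  -- hratio : PM / (PK * PL * 2^m) = exp(-m φ x)
  have hKfe : (0:ℝ) < (k ! : ℝ) := by exact_mod_cast Nat.factorial_pos k
  have hLfe : (0:ℝ) < (l ! : ℝ) := by exact_mod_cast Nat.factorial_pos l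
  constructor
  · calc (m.choose k : ℝ)/2^m = (m ! : ℝ) / ((k ! : ℝ) * (l ! : ℝ) * 2^m) := by
          rw [hchoose]; ring
      _ ≤ (SM * PM * Real.exp (1/(2*(m:ℝ)))) / ((SK * PK) * (SL * PL) * 2^m) := by
          gcongr <;> first | positivity | exact hMf2 | exact hKf1 | exact hLf1
      _ = Real.exp (1/(2*(m:ℝ))) * (SM / (SK * SL)) * (PM / (PK * PL * 2^m)) := by
          field_simp
      _ = _ := by rw [hratio]
  · calc (SM / (SK * SL)) * Real.exp (-(m:ℝ) * phi ((2*(k:ℝ)-m)/m))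
          * Real.exp (-(1/(2*(k:ℝ)) + 1/(2*(l:ℝ))))
        = (SM * PM) / ((SK * PK * Real.exp (1/(2*(k:ℝ)))) * (SL * PL * Real.exp (1/(2*(l:ℝ)))) * 2^m) := by
          rw [← hratio, Real.exp_neg, Real.exp_add]
          field_simp
      _ ≤ (m ! : ℝ) / ((k ! : ℝ) * (l ! : ℝ) * 2^m) := by
          gcongr <;> first | positivity | exact hMf1 | exact hKf2 | exact hLf2
      _ = (m.choose k : ℝ)/2^m := by rw [hchoose]; ring

lemma exp_lip {a b c : ℝ} (hc : c ≤ a) (hc' : c ≤ b) :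
    |Real.exp (-a) - Real.exp (-b)| ≤ |a - b| * Real.exp (-c) := by
  wlog hab : a ≤ b generalizing a b
  · rw [abs_sub_comm, abs_sub_comm a b]
    exact this hc' hc (le_of_not_ge hab)
  have h1 : Real.exp (-a) - Real.exp (-b) = Real.exp (-a) * (1 - Real.exp (a - b)) := by
    rw [mul_sub, mul_one, ← Real.exp_add]
    ring_nf
  have h2 : 1 - Real.exp (a - b) ≤ b - a := by
    have := Real.add_one_le_exp (a - b)
    linarith
  have h3 : 0 ≤ 1 - Real.exp (a - b) := by
    have : Real.exp (a - b) ≤ 1 := Real.exp_le_one_iff.mpr (by linarith)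
    linarith
  have h4 : 0 ≤ Real.exp (-a) * (1 - Real.exp (a-b)) := by positivity
  rw [abs_of_nonneg (h1 ▸ h4), abs_of_nonpos (by linarith : a - b ≤ 0), h1]
  calc Real.exp (-a) * (1 - Real.exp (a-b)) ≤ Real.exp (-c) * (b - a) :=
        mul_le_mul (Real.exp_le_exp.mpr (by linarith)) h2 h3 (Real.exp_pos _).le
    _ = -(a-b) * Real.exp (-c) := by ring

lemma self_exp_le {t w : ℝ} (ht : 0 < t) (hw : 0 ≤ w) :
    w * Real.exp (-w^2/(2*t)) ≤ Real.sqrt t := by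
  set u := w / Real.sqrt t with hu
  have hst : 0 < Real.sqrt t := Real.sqrt_pos.mpr ht
  have hw' : w = u * Real.sqrt t := by rw [hu]; field_simp
  have hu0 : 0 ≤ u := by positivity
  have hkey : u * Real.exp (-u^2/2) ≤ 1 := by
    rw [show -u^2/2 = -(u^2/2) by ring, Real.exp_neg]
    have h1 : u ≤ Real.exp (u^2/2) := by
      have := Real.add_one_le_exp (u^2/2)
      nlinarith [sq_nonneg (u - 1)]
    calc u * (Real.exp (u^2/2))⁻¹ ≤ Real.exp (u^2/2) * (Real.exp (u^2/2))⁻¹ := by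
          apply mul_le_mul_of_nonneg_right h1 (by positivity)
      _ = 1 := mul_inv_cancel₀ (Real.exp_pos _).ne'
  have hexp_eq : -w^2/(2*t) = -u^2/2 := by
    rw [hw']
    rw [mul_pow, Real.sq_sqrt ht.le]
    field_simp
  rw [hexp_eq, hw']
  calc u * Real.sqrt t * Real.exp (-u^2/2) = (u * Real.exp (-u^2/2)) * Real.sqrt t := by ring
    _ ≤ 1 * Real.sqrt t := by
        apply mul_le_mul_of_nonneg_right _ hst.le
        rw [neg_div] at hkey ⊢
        exact hkey
    _ = Real.sqrt t := one_mul _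

lemma heat_shift (m : ℕ) (hm : 1 ≤ m) (y z : ℝ) (h : |z - y| ≤ 2) :
    |heatK m z - heatK m y| ≤ 4 / m := by
  have hmR : (1:ℝ) ≤ (m:ℝ) := by exact_mod_cast hm
  have hm0 : (0:ℝ) < (m:ℝ) := by linarith
  set w : ℝ := max (|y| - 2) 0 with hwdef
  have hw0 : 0 ≤ w := le_max_right _ _
  have hwy : w ≤ |y| := by
    apply max_le _ (abs_nonneg y)
    linarith
  have hwz : w ≤ |z| := by
    apply max_le _ (abs_nonneg z)
    have : |y| ≤ |z| + |z - y| := by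
      calc |y| = |z - (z - y)| := by ring_nf
        _ ≤ |z| + |z - y| := abs_sub _ _
    linarith
  have hylew : |y| ≤ w + 2 := by
    rw [hwdef]
    rcases le_total (|y| - 2) 0 with h' | h'
    · rw [max_eq_right h']; linarith
    · rw [max_eq_left h']; linarith
  have hzlew : |z| ≤ w + 4 := by
    have : |z| ≤ |y| + |z - y| := by
      calc |z| = |y + (z - y)| := by ring_nf
        _ ≤ |y| + |z - y| := abs_add_le _ _
    linarith
  -- the two exponents
  set a := z^2/(2*(m:ℝ)) with ha
  set b := y^2/(2*(m:ℝ)) with hb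
  set c := w^2/(2*(m:ℝ)) with hc
  have hca : c ≤ a := by
    rw [hc, ha]
    apply div_le_div_of_nonneg_right _ (by linarith)
    · calc w^2 ≤ |z|^2 := by nlinarith
        _ = z^2 := sq_abs z
  have hcb : c ≤ b := by
    rw [hc, hb]
    apply div_le_div_of_nonneg_right _ (by linarith)
    · calc w^2 ≤ |y|^2 := by nlinarith
        _ = y^2 := sq_abs y
  have hKz : heatK m z = Real.exp (-a) / Real.sqrt (2*π*m) := by
    rw [heatK, ha, neg_div]
  have hKy : heatK m y = Real.exp (-b) / Real.sqrt (2*π*m) := by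
    rw [heatK, hb, neg_div]
  have hsq : (0:ℝ) < Real.sqrt (2*π*m) := by positivity
  have hab : |a - b| ≤ (2*w + 6)*2/(2*m) := by
    rw [ha, hb, div_sub_div_same, abs_div, abs_of_pos (by linarith : (0:ℝ) < 2*(m:ℝ))]
    apply div_le_div_of_nonneg_right _ (by linarith)
    calc |z^2 - y^2| = |z - y| * |z + y| := by rw [← abs_mul]; ring_nf
      _ ≤ 2 * (|z| + |y|) := by
          apply mul_le_mul h (abs_add_le _ _) (abs_nonneg _) (by norm_num)
      _ ≤ (2*w + 6)*2 := by nlinarith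
  have hmain : |heatK m z - heatK m y| ≤ ((2*w+6)/(m:ℝ)) * Real.exp (-c) / Real.sqrt (2*π*m) := by
    rw [hKz, hKy, div_sub_div_same, abs_div, abs_of_pos hsq]
    gcongr
    calc |Real.exp (-a) - Real.exp (-b)| ≤ |a - b| * Real.exp (-c) := exp_lip hca hcb
      _ ≤ ((2*w+6)/(m:ℝ)) * Real.exp (-c) := by
          apply mul_le_mul_of_nonneg_right _ (Real.exp_pos _).le
          calc |a-b| ≤ (2*w + 6)*2/(2*m) := hab
            _ = (2*w+6)/(m:ℝ) := by ring
  have hwexp : (2*w + 6) * Real.exp (-c) ≤ 8 * Real.sqrt m := by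
    have h1 : w * Real.exp (-w^2/(2*(m:ℝ))) ≤ Real.sqrt m := self_exp_le hm0 hw0
    have h2 : Real.exp (-c) ≤ 1 := Real.exp_le_one_iff.mpr (neg_nonpos.mpr (by rw [hc]; positivity))
    have h3 : (1:ℝ) ≤ Real.sqrt m := by
      rw [show (1:ℝ) = Real.sqrt 1 from (Real.sqrt_one).symm]
      exact Real.sqrt_le_sqrt hmR
    have hcw : c = w^2/(2*(m:ℝ)) := hc
    calc (2*w + 6) * Real.exp (-c) = 2*(w * Real.exp (-c)) + 6*Real.exp (-c) := by ring
      _ ≤ 2*Real.sqrt m + 6*Real.sqrt m := by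
          apply _root_.add_le_add
          · apply mul_le_mul_of_nonneg_left _ (by norm_num)
            rw [hcw, neg_div] at *
            exact h1
          · apply mul_le_mul_of_nonneg_left _ (by norm_num)
            linarith
      _ = 8 * Real.sqrt m := by ring
  have h4 : Real.sqrt 4 = 2 := by
    rw [show (4:ℝ) = 2^2 by norm_num]
    exact Real.sqrt_sq (by norm_num)
  have hsqrt2pi : (2:ℝ) ≤ Real.sqrt (2*π) := by
    calc (2:ℝ) = Real.sqrt 4 := h4.symm
      _ ≤ Real.sqrt (2*π) := Real.sqrt_le_sqrt (by nlinarith [Real.pi_gt_three])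
  have hsplit : Real.sqrt (2*π*m) = Real.sqrt (2*π) * Real.sqrt m := by
    rw [← Real.sqrt_mul (by positivity)]
  have hsm : (0:ℝ) < Real.sqrt m := Real.sqrt_pos.mpr hm0
  have hden : (m:ℝ) * (2*Real.sqrt m) ≤ (m:ℝ) * Real.sqrt (2*π*m) := by
    apply mul_le_mul_of_nonneg_left _ hm0.le
    rw [hsplit]
    exact mul_le_mul_of_nonneg_right hsqrt2pi (Real.sqrt_nonneg _)
  calc |heatK m z - heatK m y| ≤ ((2*w+6)/(m:ℝ)) * Real.exp (-c) / Real.sqrt (2*π*m) := hmain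
    _ = ((2*w+6) * Real.exp (-c)) / ((m:ℝ) * Real.sqrt (2*π*m)) := by ring
    _ ≤ (8 * Real.sqrt m) / ((m:ℝ) * (2 * Real.sqrt m)) :=
        div_le_div₀ (by positivity) hwexp (by positivity) hden
    _ = 4 / m := by
        field_simp
        ring

lemma exp_sub_one_le {d : ℝ} (h0 : 0 ≤ d) (h1 : d ≤ 1) : Real.exp d - 1 ≤ 3*d := by
  have he : Real.exp d ≤ Real.exp 1 := Real.exp_le_exp.mpr h1
  have he3 : Real.exp 1 ≤ 3 := by
    have := Real.exp_one_lt_d9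
    linarith
  have h2 : 1 - Real.exp (-d) ≤ d := by
    have := Real.add_one_le_exp (-d); linarith
  have h3 : Real.exp d - 1 = Real.exp d * (1 - Real.exp (-d)) := by
    rw [mul_sub, ← Real.exp_add]
    simp
  rw [h3]
  have h4 : 0 ≤ 1 - Real.exp (-d) := by
    have := Real.add_one_le_exp (-d)
    have h5 : Real.exp (-d) ≤ Real.exp 0 := Real.exp_le_exp.mpr (by linarith)
    rw [Real.exp_zero] at h5
    linarith
  apply mul_le_mul (by linarith) h2 h4 (by norm_num)

lemma sqrt_le_self' {M : ℝ} (h : 1 ≤ M) : Real.sqrt M ≤ M := by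
  calc Real.sqrt M ≤ Real.sqrt (M^2) := Real.sqrt_le_sqrt (by nlinarith)
    _ = M := Real.sqrt_sq (by linarith)

set_option maxHeartbeats 2000000 in

set_option maxHeartbeats 2000000 in
lemma core (m k : ℕ) (hm : 100 ≤ m) (h1 : 1 ≤ k) (h2 : k < m)
    (h8 : (2*(k:ℤ) - m)^8 ≤ (m:ℤ)^5) :
    |(m.choose k : ℝ)/2^m
      - Real.sqrt (2/(π*(m:ℝ))) * Real.exp (-(2*(k:ℝ)-(m:ℝ))^2/(2*(m:ℝ)))| ≤ 24/(m:ℝ) := by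
  have hM : (0:ℝ) < (m:ℝ) := by exact_mod_cast (by omega : 0 < m)
  have hM100 : (100:ℝ) ≤ (m:ℝ) := by exact_mod_cast hm
  have hM1 : (1:ℝ) ≤ (m:ℝ) := by linarith
  have hsM : (0:ℝ) < Real.sqrt m := Real.sqrt_pos.mpr hM
  have hsM10 : (10:ℝ) ≤ Real.sqrt m := by
    calc (10:ℝ) = Real.sqrt 100 := by
          rw [show (100:ℝ) = 10^2 by norm_num, Real.sqrt_sq]; norm_num
      _ ≤ Real.sqrt m := Real.sqrt_le_sqrt hM100
  obtain ⟨x, hxdef⟩ : ∃ x : ℝ, x = (2*(k:ℝ)-(m:ℝ))/(m:ℝ) := ⟨_, rfl⟩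
  have hn : 2*(k:ℝ)-(m:ℝ) = x * m := by rw [hxdef]; field_simp
  have hx8 : x^8 ≤ 1/(m:ℝ)^3 := by
    have h8R : (2*(k:ℝ)-(m:ℝ))^8 ≤ (m:ℝ)^5 := by exact_mod_cast h8
    rw [hxdef, div_pow, div_le_div_iff₀ (by positivity) (by positivity)]
    calc (2*(k:ℝ)-(m:ℝ))^8 * (m:ℝ)^3 ≤ (m:ℝ)^5 * (m:ℝ)^3 := by
          apply mul_le_mul_of_nonneg_right h8R (by positivity)
      _ = 1 * (m:ℝ)^8 := by ring
  have hsq4 : ((Real.sqrt m))^4 = (m:ℝ)^2 := by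
    rw [show (4:ℕ) = 2*2 from rfl, pow_mul, Real.sq_sqrt hM.le]
  have hx2 : x^2 ≤ 1/Real.sqrt m := by
    apply le_of_pow_le_pow_left₀ (n := 4) (by norm_num) (by positivity)
    calc (x^2)^4 = x^8 := by ring
      _ ≤ 1/(m:ℝ)^3 := hx8
      _ ≤ 1/(m:ℝ)^2 := by
          apply one_div_le_one_div_of_le (by positivity)
          nlinarith
      _ = (1/Real.sqrt m)^4 := by rw [div_pow, one_pow, hsq4]
  have hx4 : x^4 ≤ 1/((m:ℝ)*Real.sqrt m) := by
    apply le_of_pow_le_pow_left₀ (n := 2) (by norm_num) (by positivity)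
    calc (x^4)^2 = x^8 := by ring
      _ ≤ 1/(m:ℝ)^3 := hx8
      _ = (1/((m:ℝ)*Real.sqrt m))^2 := by
          rw [div_pow, one_pow, mul_pow, Real.sq_sqrt hM.le]
          ring_nf
  have hx2q : x^2 ≤ 1/4 := by
    calc x^2 ≤ 1/Real.sqrt m := hx2
      _ ≤ 1/10 := by apply one_div_le_one_div_of_le (by norm_num) hsM10
      _ ≤ 1/4 := by norm_num
  have hx2h : x^2 ≤ 1/2 := by linarith
  have habsx : |x| ≤ 1/2 := by
    apply le_of_pow_le_pow_left₀ (n := 2) (by norm_num) (by norm_num)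
    rw [← sq_abs] at hx2q
    calc |x|^2 ≤ 1/4 := hx2q
      _ = (1/2)^2 := by norm_num
  have habs : |x| < 1 := lt_of_le_of_lt habsx (by norm_num)
  have hxlo : -(1:ℝ)/2 ≤ x := by cases' abs_le.mp habsx with h _; linarith
  have hxhi : x ≤ 1/2 := (abs_le.mp habsx).2
  set l := m - k with hldef
  have hK : (0:ℝ) < (k:ℝ) := by exact_mod_cast (by omega : 0 < k)
  have hL : (0:ℝ) < ((l:ℕ):ℝ) := by exact_mod_cast (by omega : 0 < l)
  have hKL : (k:ℝ) + (l:ℝ) = (m:ℝ) := by exact_mod_cast (by omega : k + l = m)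
  have hKge : (m:ℝ)/4 ≤ (k:ℝ) := by nlinarith [hn]
  have hLge : (m:ℝ)/4 ≤ (l:ℝ) := by nlinarith [hn]
  have hinv : 1/(2*(k:ℝ)) + 1/(2*((l:ℕ):ℝ)) ≤ 4/(m:ℝ) := by
    have i1 : 1/(2*(k:ℝ)) ≤ 2/(m:ℝ) := by
      rw [div_le_div_iff₀ (by positivity) hM]
      nlinarith
    have i2 : 1/(2*((l:ℕ):ℝ)) ≤ 2/(m:ℝ) := by
      rw [div_le_div_iff₀ (by positivity) hM]
      nlinarith
    calc 1/(2*(k:ℝ)) + 1/(2*((l:ℕ):ℝ)) ≤ 2/(m:ℝ) + 2/(m:ℝ) := add_le_add i1 i2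
      _ = 4/(m:ℝ) := by ring
  obtain ⟨hup, hlo⟩ := choose_bounds m k h1 h2
  rw [← hldef] at hup hlo
  rw [← hxdef] at hup hlo
  have hSle := S_le m k h1 h2 (by rw [← hxdef]; exact hx2h)
  have hSge := S_ge m k h1 h2
  try rw [← hldef] at hSle hSge
  try rw [← hxdef] at hSle
  try rw [← hxdef] at hSge
  obtain ⟨S, hSdef⟩ : ∃ S : ℝ, S = Real.sqrt (2*π*m) / (Real.sqrt (2*π*k) * Real.sqrt (2*π*((l:ℕ):ℝ))) := ⟨_, rfl⟩
  rw [← hSdef] at hup hlo hSle hSge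
  obtain ⟨Q, hQdef⟩ : ∃ Q : ℝ, Q = Real.sqrt (2/(π*(m:ℝ))) := ⟨_, rfl⟩
  rw [← hQdef] at hSle hSge
  have hQpos : 0 < Q := by rw [hQdef]; positivity
  have hQle : Q ≤ 1/Real.sqrt m := by
    rw [hQdef]
    calc Real.sqrt (2/(π*(m:ℝ))) ≤ Real.sqrt (1/(m:ℝ)) := by
          apply Real.sqrt_le_sqrt
          rw [div_le_div_iff₀ (by positivity) hM]
          nlinarith [Real.pi_gt_three]
      _ = 1/Real.sqrt m := by
          rw [one_div, one_div, Real.sqrt_inv]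
  have hEexp : -(2*(k:ℝ)-(m:ℝ))^2/(2*(m:ℝ)) = -((m:ℝ)*(x^2/2)) := by
    rw [hn]
    field_simp
  rw [hEexp]
  rw [← hQdef]
  obtain ⟨H, hHdef⟩ : ∃ H : ℝ, H = Q * Real.exp (-((m:ℝ)*(x^2/2))) := ⟨_, rfl⟩
  rw [show Q * Real.exp (-((m:ℝ)*(x^2/2))) = H from hHdef.symm]
  have hHpos : 0 < H := by rw [hHdef]; positivity
  have hHleQ : H ≤ Q := by
    rw [hHdef]
    calc Q * Real.exp (-((m:ℝ)*(x^2/2))) ≤ Q * 1 := by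
          apply mul_le_mul_of_nonneg_left _ hQpos.le
          apply Real.exp_le_one_iff.mpr
          have : (0:ℝ) ≤ (m:ℝ)*(x^2/2) := by positivity
          linarith
      _ = Q := mul_one Q
  obtain ⟨d, hddef⟩ : ∃ d : ℝ, d = 8/Real.sqrt m := ⟨_, rfl⟩
  have hd0 : 0 < d := by rw [hddef]; positivity
  have hd1 : d ≤ 1 := by
    rw [hddef, div_le_one hsM]
    linarith
  -- upper bound on G
  have hphilo := phi_ge habs
  have hphihi := phi_le hx2h
  have hGup : (m.choose k : ℝ)/2^m ≤ H * Real.exp d := by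
    have e1 : Real.exp (-(m:ℝ)*phi x) ≤ Real.exp (-((m:ℝ)*(x^2/2))) := by
      apply Real.exp_le_exp.mpr
      have := mul_le_mul_of_nonneg_left hphilo hM.le
      nlinarith
    have step : (m.choose k : ℝ)/2^m
        ≤ Real.exp (1/(2*(m:ℝ))) * (Q * Real.exp (x^2)) * Real.exp (-((m:ℝ)*(x^2/2))) := by
      calc (m.choose k : ℝ)/2^m ≤ Real.exp (1/(2*(m:ℝ))) * S * Real.exp (-(m:ℝ)*phi x) := hup
        _ ≤ Real.exp (1/(2*(m:ℝ))) * (Q * Real.exp (x^2)) * Real.exp (-((m:ℝ)*(x^2/2))) := by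
            apply mul_le_mul
            · apply mul_le_mul_of_nonneg_left hSle (Real.exp_pos _).le
            · exact e1
            · positivity
            · exact mul_nonneg (Real.exp_pos _).le (mul_nonneg hQpos.le (Real.exp_pos _).le)
    calc (m.choose k : ℝ)/2^m
        ≤ Real.exp (1/(2*(m:ℝ))) * (Q * Real.exp (x^2)) * Real.exp (-((m:ℝ)*(x^2/2))) := step
      _ = H * Real.exp (1/(2*(m:ℝ)) + x^2) := by
          rw [hHdef, Real.exp_add]
          ring
      _ ≤ H * Real.exp d := by
          apply mul_le_mul_of_nonneg_left _ hHpos.le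
          apply Real.exp_le_exp.mpr
          have i1 : 1/(2*(m:ℝ)) ≤ 1/Real.sqrt m := by
            apply one_div_le_one_div_of_le hsM
            nlinarith [sqrt_le_self' hM1]
          rw [hddef]
          have : (8:ℝ)/Real.sqrt m = 1/Real.sqrt m + 7/Real.sqrt m := by ring
          rw [this]
          have i2 : x^2 ≤ 7/Real.sqrt m := by
            calc x^2 ≤ 1/Real.sqrt m := hx2
              _ ≤ 7/Real.sqrt m := by gcongr <;> norm_num
          linarith
  -- lower bound on G
  have hGlo : H * Real.exp (-d) ≤ (m.choose k : ℝ)/2^m := by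
    have e1 : Real.exp (-((m:ℝ)*(x^2/2)) - 2*(m:ℝ)*x^4) ≤ Real.exp (-(m:ℝ)*phi x) := by
      apply Real.exp_le_exp.mpr
      have := mul_le_mul_of_nonneg_left hphihi hM.le
      nlinarith
    have e2 : Real.exp (-(4/(m:ℝ))) ≤ Real.exp (-(1/(2*(k:ℝ)) + 1/(2*((l:ℕ):ℝ)))) := by
      apply Real.exp_le_exp.mpr
      linarith
    have step : Q * Real.exp (-((m:ℝ)*(x^2/2)) - 2*(m:ℝ)*x^4) * Real.exp (-(4/(m:ℝ)))
        ≤ (m.choose k : ℝ)/2^m := by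
      calc Q * Real.exp (-((m:ℝ)*(x^2/2)) - 2*(m:ℝ)*x^4) * Real.exp (-(4/(m:ℝ)))
          ≤ S * Real.exp (-(m:ℝ)*phi x) * Real.exp (-(1/(2*(k:ℝ)) + 1/(2*((l:ℕ):ℝ)))) := by
            apply mul_le_mul
            · exact mul_le_mul hSge e1 (Real.exp_pos _).le (le_trans hQpos.le hSge)
            · exact e2
            · positivity
            · exact mul_nonneg (le_trans hQpos.le hSge) (Real.exp_pos _).le
        _ ≤ (m.choose k : ℝ)/2^m := hlo
    calc H * Real.exp (-d)
        = Q * Real.exp (-((m:ℝ)*(x^2/2))) * Real.exp (-d) := by rw [hHdef]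
      _ ≤ Q * Real.exp (-((m:ℝ)*(x^2/2)) - 2*(m:ℝ)*x^4) * Real.exp (-(4/(m:ℝ))) := by
          rw [mul_assoc, mul_assoc, ← Real.exp_add, ← Real.exp_add]
          apply mul_le_mul_of_nonneg_left _ hQpos.le
          apply Real.exp_le_exp.mpr
          have i1 : 2*(m:ℝ)*x^4 ≤ 2/Real.sqrt m := by
            calc 2*(m:ℝ)*x^4 ≤ 2*(m:ℝ)*(1/((m:ℝ)*Real.sqrt m)) := by
                  apply mul_le_mul_of_nonneg_left hx4 (by positivity)
              _ = 2/Real.sqrt m := by field_simp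
          have i2 : 4/(m:ℝ) ≤ 4/Real.sqrt m := by
            apply div_le_div_of_nonneg_left (by norm_num) hsM (sqrt_le_self' hM1)
          rw [hddef]
          have hd6 : 2/Real.sqrt m + 4/Real.sqrt m ≤ 8/Real.sqrt m := by
            rw [← add_div]
            gcongr <;> norm_num
          linarith
      _ ≤ (m.choose k : ℝ)/2^m := step
  -- combine
  have hexp1 : Real.exp d - 1 ≤ 3*d := exp_sub_one_le hd0.le hd1
  have habsle : |(m.choose k : ℝ)/2^m - H| ≤ H * (Real.exp d - 1) := by
    rw [abs_le]
    constructor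
    · have h5 : 1 - Real.exp (-d) ≤ Real.exp d - 1 := by
        have i1 := Real.add_one_le_exp d
        have i2 := Real.add_one_le_exp (-d)
        linarith
      have : H * Real.exp (-d) ≥ H - H*(Real.exp d - 1) := by nlinarith
      linarith [hGlo]
    · nlinarith [hGup]
  calc |(m.choose k : ℝ)/2^m - H| ≤ H * (Real.exp d - 1) := habsle
    _ ≤ (1/Real.sqrt m) * (3*d) := by
        apply mul_le_mul (le_trans hHleQ hQle) hexp1 _ (by positivity)
        have := Real.add_one_le_exp d
        linarith
    _ = 24/((Real.sqrt m)*(Real.sqrt m)) := by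
        rw [hddef]
        field_simp
        ring
    _ = 24/(m:ℝ) := by rw [Real.mul_self_sqrt hM.le]

lemma G_le_tail (m k : ℕ) (hm : 2 ≤ m) (hk : k ≤ m) :
    (m.choose k : ℝ)/2^m ≤ 2 * Real.exp (-(2*(k:ℝ)-(m:ℝ))^2/(2*(m:ℝ))) := by
  have hM : (0:ℝ) < (m:ℝ) := by exact_mod_cast (by omega : 0 < m)
  have hM2 : (2:ℝ) ≤ (m:ℝ) := by exact_mod_cast hm
  have hendpoint : (1:ℝ)/2^m ≤ 2 * Real.exp (-((m:ℝ))^2/(2*(m:ℝ))) := by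
    have he : -((m:ℝ))^2/(2*(m:ℝ)) = -((m:ℕ) * (1/2 : ℝ)) := by field_simp
    have key : Real.exp ((m:ℕ) * (1/2:ℝ)) ≤ 2^m := by
      rw [Real.exp_nat_mul]
      apply pow_le_pow_left₀ (Real.exp_pos _).le
      exact exp_le_two (by norm_num) (by norm_num)
    have h2 : (1:ℝ)/2^m ≤ 1/Real.exp ((m:ℕ)*(1/2:ℝ)) :=
      one_div_le_one_div_of_le (Real.exp_pos _) key
    calc (1:ℝ)/2^m ≤ 1/Real.exp ((m:ℕ)*(1/2:ℝ)) := h2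
      _ = Real.exp (-((m:ℕ)*(1/2:ℝ))) := by rw [Real.exp_neg, one_div]
      _ = Real.exp (-((m:ℝ))^2/(2*(m:ℝ))) := by rw [he]
      _ ≤ 2 * Real.exp (-((m:ℝ))^2/(2*(m:ℝ))) := by nlinarith [Real.exp_pos (-((m:ℝ))^2/(2*(m:ℝ)))]
  rcases Nat.eq_zero_or_pos k with hk0 | hk1
  · subst hk0
    simp only [Nat.choose_zero_right, Nat.cast_one, Nat.cast_zero]
    calc (1:ℝ)/2^m ≤ 2 * Real.exp (-((m:ℝ))^2/(2*(m:ℝ))) := hendpoint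
      _ = 2 * Real.exp (-(2*(0:ℝ)-(m:ℝ))^2/(2*(m:ℝ))) := by ring_nf
  rcases Nat.lt_or_ge k m with hkm | hkm
  swap
  · have hkm' : k = m := le_antisymm hk hkm
    subst hkm'
    simp only [Nat.choose_self, Nat.cast_one]
    calc (1:ℝ)/2^k ≤ 2 * Real.exp (-((k:ℝ))^2/(2*(k:ℝ))) := hendpoint
      _ = 2 * Real.exp (-(2*(k:ℝ)-(k:ℝ))^2/(2*(k:ℝ))) := by ring_nf
  -- middle case
  set l := m - k with hldef
  have hK : (0:ℝ) < (k:ℝ) := by exact_mod_cast hk1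
  have hL : (0:ℝ) < ((l:ℕ):ℝ) := by exact_mod_cast (by omega : 0 < l)
  have hKL : (k:ℝ) + (l:ℝ) = (m:ℝ) := by exact_mod_cast (by omega : k + l = m)
  obtain ⟨hup, _⟩ := choose_bounds m k hk1 hkm
  rw [← hldef] at hup
  set x : ℝ := (2*(k:ℝ)-(m:ℝ))/(m:ℝ) with hxdef
  have habs : |x| < 1 := by
    rw [hxdef, abs_div, abs_of_pos hM, div_lt_one hM, abs_lt]
    constructor <;> nlinarith
  have hS1 : Real.sqrt (2*π*m) / (Real.sqrt (2*π*k) * Real.sqrt (2*π*((l:ℕ):ℝ))) ≤ 1 := by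
    rw [div_le_one (by positivity), ← Real.sqrt_mul (by positivity)]
    have hK1 : (1:ℝ) ≤ (k:ℝ) := by exact_mod_cast hk1
    have hL1 : (1:ℝ) ≤ ((l:ℕ):ℝ) := by exact_mod_cast (by omega : 1 ≤ l)
    calc Real.sqrt (2*π*(m:ℝ)) ≤ Real.sqrt (2*π*(k:ℝ)*(2*π*(l:ℝ))) := by
          apply Real.sqrt_le_sqrt
          have hkl : (m:ℝ) - 1 ≤ (k:ℝ)*(l:ℝ) := by
            nlinarith [mul_nonneg (sub_nonneg.mpr hK1) (sub_nonneg.mpr hL1)]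
          have step1 : 2*π*(m:ℝ) ≤ 4*π^2*((m:ℝ)-1) := by
            nlinarith [Real.pi_gt_three, hM2, mul_le_mul_of_nonneg_right hM2 Real.pi_pos.le]
          have step2 : 4*π^2*((m:ℝ)-1) ≤ 4*π^2*((k:ℝ)*(l:ℝ)) :=
            mul_le_mul_of_nonneg_left hkl (by positivity)
          calc 2*π*(m:ℝ) ≤ 4*π^2*((m:ℝ)-1) := step1
            _ ≤ 4*π^2*((k:ℝ)*(l:ℝ)) := step2
            _ = 2*π*(k:ℝ)*(2*π*(l:ℝ)) := by ring
      _ = _ := rfl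
  have hexp1 : Real.exp (1/(2*(m:ℝ))) ≤ 2 := by
    apply exp_le_two (by positivity)
    rw [div_le_div_iff₀ (by positivity) (by norm_num)]
    linarith
  have hphi : Real.exp (-(m:ℝ)*phi x) ≤ Real.exp (-(2*(k:ℝ)-(m:ℝ))^2/(2*(m:ℝ))) := by
    apply Real.exp_le_exp.mpr
    have h1 := phi_ge habs
    have h2 : x^2 = (2*(k:ℝ)-(m:ℝ))^2/(m:ℝ)^2 := by rw [hxdef, div_pow]
    have h3 := mul_le_mul_of_nonneg_left h1 hM.le
    rw [h2] at h3
    have h4 : (m:ℝ) * ((2*(k:ℝ)-(m:ℝ))^2/(m:ℝ)^2 / 2) = (2*(k:ℝ)-(m:ℝ))^2/(2*(m:ℝ)) := by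
      field_simp
    rw [h4] at h3
    rw [neg_div]
    linarith
  calc (m.choose k : ℝ)/2^m
      ≤ Real.exp (1/(2*(m:ℝ)))
        * (Real.sqrt (2*π*m) / (Real.sqrt (2*π*k) * Real.sqrt (2*π*((l:ℕ):ℝ))))
        * Real.exp (-(m:ℝ)*phi x) := hup
    _ ≤ 2 * 1 * Real.exp (-(2*(k:ℝ)-(m:ℝ))^2/(2*(m:ℝ))) := by
        apply mul_le_mul _ hphi (Real.exp_pos _).le (by norm_num)
        apply mul_le_mul hexp1 hS1 (by positivity) (by norm_num)
    _ = 2 * Real.exp (-(2*(k:ℝ)-(m:ℝ))^2/(2*(m:ℝ))) := by ring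

lemma exp_neg_le720 {u : ℝ} (hu : 0 < u) : Real.exp (-u) ≤ 720/u^6 := by
  have h := exp_lb6 hu.le
  calc Real.exp (-u) = 1/Real.exp u := by rw [Real.exp_neg, one_div]
    _ ≤ 1/(u^6/720) := one_div_le_one_div_of_le (by positivity) h
    _ = 720/u^6 := one_div_div _ _

lemma n12_ge (m : ℕ) (n : ℤ) (hm : 1 ≤ m) (h8 : (m:ℤ)^5 < n^8) :
    (m:ℝ)^7 * Real.sqrt m ≤ ((n:ℝ)^2)^6 := by
  have hM : (1:ℝ) ≤ (m:ℝ) := by exact_mod_cast hm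
  have hM0 : (0:ℝ) < (m:ℝ) := by linarith
  have h8R : (m:ℝ)^5 ≤ (n:ℝ)^8 := by exact_mod_cast h8.le
  apply le_of_pow_le_pow_left₀ (n := 2) two_ne_zero (by positivity)
  calc ((m:ℝ)^7*Real.sqrt m)^2 = ((m:ℝ)^5)^3 := by
        rw [mul_pow, Real.sq_sqrt hM0.le]; ring
    _ ≤ ((n:ℝ)^8)^3 := pow_le_pow_left₀ (by positivity) h8R 3
    _ = (((n:ℝ)^2)^6)^2 := by ring

lemma heat2_eq (m : ℕ) (hm : 1 ≤ m) (y : ℝ) :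
    2 * heatK m y = Real.sqrt (2/(π*(m:ℝ))) * Real.exp (-y^2/(2*(m:ℝ))) := by
  have hM : (0:ℝ) < (m:ℝ) := by exact_mod_cast hm
  rw [heatK, sqrt_id _ hM]
  ring

lemma sqrt2pim_ge (m : ℕ) (hm : 1 ≤ m) :
    (1:ℝ) ≤ Real.sqrt (2*π*(m:ℝ)) ∧ (2:ℝ) ≤ Real.sqrt (2*π*(m:ℝ)) := by
  have hM : (1:ℝ) ≤ (m:ℝ) := by exact_mod_cast hm
  have h2 : (2:ℝ) ≤ Real.sqrt (2*π*(m:ℝ)) := by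
    have : (4:ℝ) ≤ 2*π*(m:ℝ) := by nlinarith [Real.pi_gt_three]
    calc (2:ℝ) = Real.sqrt 4 := by
          rw [show (4:ℝ) = 2^2 by norm_num, Real.sqrt_sq]; norm_num
      _ ≤ _ := Real.sqrt_le_sqrt this
  exact ⟨by linarith, h2⟩

set_option maxHeartbeats 2000000 in

set_option maxHeartbeats 2000000 in
/-- **Local limit theorem for the simple random walk.**
There is a constant `C > 0` such that for every `m ≥ 1`, every integer `n` with `m + n`
even, and every real `z ∈ [n - 2, n + 2]`, one has `|G(m,n) − 2 p_m(z)| ≤ C/m`. -/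
theorem local_limit_theorem :
    ∃ C > 0, ∀ m : ℕ, 1 ≤ m → ∀ n : ℤ, Even ((m : ℤ) + n) →
      ∀ z : ℝ, (n : ℝ) - 2 ≤ z → z ≤ (n : ℝ) + 2 →
        |rwG m n - 2 * heatK m z| ≤ C / m := by
  refine ⟨10^9, by norm_num, ?_⟩
  intro m hm n heven z hz1 hz2
  have hM : (0:ℝ) < (m:ℝ) := by exact_mod_cast hm
  have hM1 : (1:ℝ) ≤ (m:ℝ) := by exact_mod_cast hm
  have hG0 : 0 ≤ rwG m n := by rw [rwG]; positivity
  have hH0 : 0 ≤ heatK m z := by rw [heatK]; positivity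
  by_cases hbig : m ≤ 1000000000
  · -- small m : trivial bound
    have hG1 : rwG m n ≤ 1 := by
      rw [rwG, div_le_one (by positivity)]
      have hc := Finset.card_filter_le Finset.univ
        (fun f : Fin m → Bool => (∑ i, if f i then (1 : ℤ) else -1) = n)
      have hcard : (Finset.univ : Finset (Fin m → Bool)).card = 2^m := by
        rw [Finset.card_univ, Fintype.card_fun, Fintype.card_bool, Fintype.card_fin]
      calc ((Finset.univ.filter fun f : Fin m → Bool =>
            (∑ i, if f i then (1 : ℤ) else -1) = n).card : ℝ)
          ≤ ((Finset.univ : Finset (Fin m → Bool)).card : ℝ) := by exact_mod_cast hc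
        _ = 2^m := by rw [hcard]; push_cast; ring
    have hH1 : 2 * heatK m z ≤ 1 := by
      rw [heatK]
      have h2 := (sqrt2pim_ge m hm).2
      have hexp : Real.exp (-z^2/(2*(m:ℝ))) ≤ 1 := by
        apply Real.exp_le_one_iff.mpr
        rw [neg_div]
        simp only [neg_nonpos]
        positivity
      have := div_le_div₀ (by norm_num : (0:ℝ) ≤ 1) hexp (by norm_num : (0:ℝ) < 2) h2
      linarith
    have habs : |rwG m n - 2 * heatK m z| ≤ 1 := by
      rw [abs_le]
      constructor <;> nlinarith
    calc |rwG m n - 2 * heatK m z| ≤ 1 := habs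
      _ ≤ 10^9/(m:ℝ) := by
          rw [le_div_iff₀ hM, one_mul]
          calc (m:ℝ) ≤ 1000000000 := by exact_mod_cast hbig
            _ ≤ 10^9 := by norm_num
  · push_neg at hbig
    have hm100 : 100 ≤ m := by omega
    have hm2 : 2 ≤ m := by omega
    have hM100 : (100:ℝ) ≤ (m:ℝ) := by exact_mod_cast hm100
    have hsM10 : (10:ℝ) ≤ Real.sqrt m := by
      calc (10:ℝ) = Real.sqrt 100 := by
            rw [show (100:ℝ) = 10^2 by norm_num, Real.sqrt_sq]; norm_num
        _ ≤ Real.sqrt m := Real.sqrt_le_sqrt hM100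
    have hsM : (0:ℝ) < Real.sqrt m := by linarith
    have hzn : |z - (n:ℝ)| ≤ 2 := abs_le.mpr ⟨by linarith, by linarith⟩
    have hshift : |heatK m z - heatK m (n:ℝ)| ≤ 4/(m:ℝ) := heat_shift m hm (n:ℝ) z hzn
    by_cases h8 : n^8 ≤ (m:ℤ)^5
    · -- central region
      have h58 : (m:ℤ)^5 ≤ (m:ℤ)^8 := by
        apply pow_le_pow_right₀ (by exact_mod_cast hm)
        norm_num
      have hablt : |n| < (m:ℤ) := by
        by_contra hcon
        push_neg at hcon
        have h1 : (m:ℤ)^8 ≤ |n|^8 := pow_le_pow_left₀ (by positivity) hcon 8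
        have h2 : |n|^8 = n^8 := by
          rw [← abs_pow, abs_of_nonneg (by positivity)]
        have h3 : (m:ℤ)^5 < (m:ℤ)^8 := by
          have h2m : (2:ℤ) ≤ (m:ℤ) := by exact_mod_cast hm2
          have hcube : (8:ℤ) ≤ (m:ℤ)^3 := by
            calc (8:ℤ) = 2^3 := by norm_num
              _ ≤ (m:ℤ)^3 := pow_le_pow_left₀ (by norm_num) h2m 3
          have hpos := pow_pos (show (0:ℤ) < m by omega) 5
          calc (m:ℤ)^5 < (m:ℤ)^5 * 8 := by nlinarith
            _ ≤ (m:ℤ)^5 * (m:ℤ)^3 := mul_le_mul_of_nonneg_left hcube (by positivity)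
            _ = (m:ℤ)^8 := by ring
        omega
      obtain ⟨c, hc⟩ := heven
      obtain ⟨k, hk1, hk2⟩ : ∃ k : ℕ, k ≤ m ∧ 2*(k:ℤ) - m = n := by
        refine ⟨((m + n)/2).toNat, ?_, ?_⟩ <;>
        · rw [abs_lt] at hablt
          omega
      have hk1' : 1 ≤ k := by rw [abs_lt] at hablt; omega
      have hk2' : k < m := by rw [abs_lt] at hablt; omega
      have hcore := core m k hm100 hk1' hk2' (by rw [hk2]; exact h8)
      have hGeq : rwG m n = (m.choose k : ℝ)/2^m := by rw [← hk2, rwG_eq]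
      have hcastn : (2*(k:ℝ)-(m:ℝ)) = ((n:ℤ):ℝ) := by exact_mod_cast congrArg (Int.cast : ℤ → ℝ) hk2
      rw [hcastn] at hcore
      rw [← heat2_eq m hm] at hcore
      calc |rwG m n - 2 * heatK m z|
          ≤ |rwG m n - 2 * heatK m (n:ℝ)| + |2 * heatK m (n:ℝ) - 2 * heatK m z| := by
            have := abs_sub_le (rwG m n) (2 * heatK m (n:ℝ)) (2 * heatK m z)
            linarith
        _ ≤ 24/(m:ℝ) + 8/(m:ℝ) := by
            apply _root_.add_le_add
            · rw [hGeq]; exact hcore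
            · have : |2 * heatK m (n:ℝ) - 2 * heatK m z| = 2 * |heatK m z - heatK m (n:ℝ)| := by
                rw [← abs_neg]
                rw [show -(2 * heatK m (n:ℝ) - 2 * heatK m z) = 2*(heatK m z - heatK m (n:ℝ)) by ring]
                rw [abs_mul, abs_of_pos (by norm_num : (0:ℝ) < 2)]
              rw [this]
              calc 2 * |heatK (m:ℝ) z - heatK (m:ℝ) (n:ℝ)| ≤ 2 * (4/(m:ℝ)) := by linarith
                _ = 8/(m:ℝ) := by ring
        _ ≤ 10^9/(m:ℝ) := by
            rw [← add_div]
            gcongr <;> norm_num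
    · -- tail region
      push_neg at h8
      have hn0 : n ≠ 0 := by
        intro h0
        rw [h0] at h8
        simp at h8
        nlinarith [pow_pos (show (0:ℤ) < m by omega) 5]
      have hnR : (0:ℝ) < (n:ℝ)^2 := by positivity
      have h12 := n12_ge m n hm h8
      -- G bound
      have hGle : rwG m n ≤ 2 * Real.exp (-((n:ℝ))^2/(2*(m:ℝ))) := by
        rcases le_or_gt (|n|) (m:ℤ) with hle | hgt
        · obtain ⟨c, hc⟩ := heven
          obtain ⟨k, hk1, hk2⟩ : ∃ k : ℕ, k ≤ m ∧ 2*(k:ℤ) - m = n := by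
            refine ⟨((m + n)/2).toNat, ?_, ?_⟩ <;>
            · rw [abs_le] at hle
              omega
          have hGeq : rwG m n = (m.choose k : ℝ)/2^m := by rw [← hk2, rwG_eq]
          have hcastn : (2*(k:ℝ)-(m:ℝ)) = ((n:ℤ):ℝ) := by
            exact_mod_cast congrArg (Int.cast : ℤ → ℝ) hk2
          have := G_le_tail m k hm2 hk1
          rw [hcastn] at this
          rw [hGeq]
          exact this
        · rw [rwG_out m n hgt]
          positivity
      have hu : (0:ℝ) < ((n:ℝ))^2/(2*(m:ℝ)) := by positivity
      have ht1 : Real.exp (-((n:ℝ))^2/(2*(m:ℝ))) ≤ 46080/((m:ℝ)*Real.sqrt m) := by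
        rw [neg_div]
        calc Real.exp (-(((n:ℝ))^2/(2*(m:ℝ)))) ≤ 720/(((n:ℝ))^2/(2*(m:ℝ)))^6 := exp_neg_le720 hu
          _ = 720*(2*(m:ℝ))^6/((n:ℝ)^2)^6 := by
              rw [div_pow]
              field_simp
          _ ≤ 720*(2*(m:ℝ))^6/((m:ℝ)^7 * Real.sqrt m) := by
              apply div_le_div_of_nonneg_left (by positivity) (by positivity) h12
          _ = 46080/((m:ℝ)*Real.sqrt m) := by
              rw [show (2*(m:ℝ))^6 = 64*(m:ℝ)^6 by ring]
              rw [div_eq_div_iff (by positivity) (by positivity)]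
              ring
      -- heatK z bound
      have hn4 : (4:ℤ) ≤ |n| := by
        by_contra hcon
        push_neg at hcon
        have h1 : |n|^8 ≤ 3^8 := pow_le_pow_left₀ (abs_nonneg n) (by omega) 8
        have h2 : |n|^8 = n^8 := by rw [← abs_pow, abs_of_nonneg (by positivity)]
        have h3 : (100:ℤ)^5 ≤ (m:ℤ)^5 := pow_le_pow_left₀ (by norm_num) (by exact_mod_cast hm100) 5
        norm_num at h1 h3
        omega
      have hn4R : (4:ℝ) ≤ |(n:ℝ)| := by
        have : ((4:ℤ):ℝ) ≤ |((n:ℤ):ℝ)| := by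
          rw [← Int.cast_abs]
          exact_mod_cast hn4
        simpa using this
      have hzabs : |(n:ℝ)|/2 ≤ |z| := by
        have h1 : |(n:ℝ)| ≤ |z| + 2 := by
          have := abs_sub_abs_le_abs_sub (n:ℝ) z
          rw [abs_sub_comm] at hzn
          linarith
        linarith
      have hz2' : ((n:ℝ))^2/4 ≤ z^2 := by
        calc ((n:ℝ))^2/4 = (|(n:ℝ)|/2)^2 := by rw [div_pow, sq_abs]; norm_num
          _ ≤ |z|^2 := by nlinarith [abs_nonneg (n:ℝ), abs_nonneg z]
          _ = z^2 := sq_abs z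
      have hu8 : (0:ℝ) < ((n:ℝ))^2/(8*(m:ℝ)) := by positivity
      have ht2 : Real.exp (-z^2/(2*(m:ℝ))) ≤ 188743680/((m:ℝ)*Real.sqrt m) := by
        have step1 : Real.exp (-z^2/(2*(m:ℝ))) ≤ Real.exp (-(((n:ℝ))^2/(8*(m:ℝ)))) := by
          apply Real.exp_le_exp.mpr
          rw [neg_div]
          have : ((n:ℝ))^2/(8*(m:ℝ)) ≤ z^2/(2*(m:ℝ)) := by
            rw [div_le_div_iff₀ (by positivity) (by positivity)]
            nlinarith
          linarith
        calc Real.exp (-z^2/(2*(m:ℝ))) ≤ Real.exp (-(((n:ℝ))^2/(8*(m:ℝ)))) := step1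
          _ ≤ 720/(((n:ℝ))^2/(8*(m:ℝ)))^6 := exp_neg_le720 hu8
          _ = 720*(8*(m:ℝ))^6/((n:ℝ)^2)^6 := by
              rw [div_pow]
              field_simp
          _ ≤ 720*(8*(m:ℝ))^6/((m:ℝ)^7 * Real.sqrt m) := by
              apply div_le_div_of_nonneg_left (by positivity) (by positivity) h12
          _ = 188743680/((m:ℝ)*Real.sqrt m) := by
              rw [show (8*(m:ℝ))^6 = 262144*(m:ℝ)^6 by ring]
              rw [div_eq_div_iff (by positivity) (by positivity)]
              ring
      have hheat : 2 * heatK m z ≤ 37748736/(m:ℝ) := by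
        rw [heatK]
        have h1 := (sqrt2pim_ge m hm).1
        have step : Real.exp (-z^2/(2*(m:ℝ)))/Real.sqrt (2*π*(m:ℝ)) ≤ 188743680/((m:ℝ)*Real.sqrt m) := by
          calc Real.exp (-z^2/(2*(m:ℝ)))/Real.sqrt (2*π*(m:ℝ))
              ≤ Real.exp (-z^2/(2*(m:ℝ)))/1 := by
                apply div_le_div_of_nonneg_left (Real.exp_pos _).le (by norm_num) h1
            _ = Real.exp (-z^2/(2*(m:ℝ))) := div_one _
            _ ≤ 188743680/((m:ℝ)*Real.sqrt m) := ht2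
        have hms : 188743680/((m:ℝ)*Real.sqrt m) ≤ 18874368/(m:ℝ) := by
          rw [div_le_div_iff₀ (by positivity) hM]
          calc 188743680*(m:ℝ) = 18874368*((m:ℝ)*10) := by ring
            _ ≤ 18874368*((m:ℝ)*Real.sqrt m) := by
                apply mul_le_mul_of_nonneg_left _ (by norm_num)
                apply mul_le_mul_of_nonneg_left hsM10 hM.le
        have h2' := mul_le_mul_of_nonneg_left (le_trans step hms) (by norm_num : (0:ℝ) ≤ 2)
        calc 2 * (Real.exp (-z^2/(2*(m:ℝ)))/Real.sqrt (2*π*(m:ℝ)))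
            ≤ 2 * (18874368/(m:ℝ)) := h2'
          _ = 37748736/(m:ℝ) := by ring
      have hGsm : rwG m n ≤ 92160/((m:ℝ)*Real.sqrt m) := by
        calc rwG m n ≤ 2 * Real.exp (-((n:ℝ))^2/(2*(m:ℝ))) := hGle
          _ ≤ 2 * (46080/((m:ℝ)*Real.sqrt m)) := by
              apply mul_le_mul_of_nonneg_left ht1 (by norm_num)
          _ = 92160/((m:ℝ)*Real.sqrt m) := by ring
      have hGsm2 : rwG m n ≤ 9216/(m:ℝ) := by
        calc rwG m n ≤ 92160/((m:ℝ)*Real.sqrt m) := hGsm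
          _ ≤ 9216/(m:ℝ) := by
              rw [div_le_div_iff₀ (by positivity) hM]
              calc 92160*(m:ℝ) = 9216*((m:ℝ)*10) := by ring
                _ ≤ 9216*((m:ℝ)*Real.sqrt m) := by
                    apply mul_le_mul_of_nonneg_left _ (by norm_num)
                    apply mul_le_mul_of_nonneg_left hsM10 hM.le
      calc |rwG m n - 2 * heatK m z| ≤ rwG m n + 2 * heatK m z := by
            have h0 : (0:ℝ) ≤ 2 * heatK m z := by linarith
            rw [abs_le]
            constructor <;> linarith
        _ ≤ 9216/(m:ℝ) + 37748736/(m:ℝ) := _root_.add_le_add hGsm2 hheat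
        _ ≤ 10^9/(m:ℝ) := by
            rw [← add_div]
            gcongr <;> norm_num
end
end

section
/- Fix H ∈ (1/2, 1). There exists a constant C > 0, depending only on H, such that for every T > 0 and every measurable function f : ℝ → ℝ that vanishes outside [0, T] and satisfies ∫_0^T |f(s)|^{1/H} ds < ∞, one has H(2H-1) ∫_ℝ ∫_ℝ |t - s|^{2H-2} |f(s)| |f(t)| ds dt ≤ C ( ∫_0^T |f(s)|^{1/H} ds )^{2H}. -/
open MeasureTheory

namespace HLSAux

open Set
open scoped ENNReal

noncomputable def ker (H : ℝ) : ℝ → ℝ → ℝ≥0∞ := fun s t => ENNReal.ofReal (|t - s| ^ (2*H-2))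

lemma two_conv (m : ℤ) : ENNReal.ofReal ((2:ℝ)^m) = (2:ℝ≥0∞)^(m:ℝ) := by
  rw [← Real.rpow_intCast 2 m, ← ENNReal.ofReal_rpow_of_pos two_pos, ENNReal.ofReal_ofNat]

lemma two_rpow_ne_top (x : ℝ) : (2:ℝ≥0∞)^x ≠ ⊤ := by
  rw [Ne, ENNReal.rpow_eq_top_iff]
  push_neg
  constructor
  · intro h; exact absurd h (by norm_num)
  · intro h; exact absurd h (by norm_num)

lemma two_rpow_ne_zero (x : ℝ) : (2:ℝ≥0∞)^x ≠ 0 := by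
  rw [Ne, ENNReal.rpow_eq_zero_iff]
  push_neg
  constructor
  · intro h; exact absurd h (by norm_num)
  · intro h; exact absurd h (by norm_num)


lemma meas_rpow_const (c : ℝ) : Measurable fun x : ℝ => x ^ c := by measurability

lemma ker_meas (H : ℝ) :
    Measurable fun q : ℝ × ℝ => ker H q.1 q.2 :=
  ((meas_rpow_const (2*H-2)).comp ((measurable_snd.sub measurable_fst).abs)).ennreal_ofReal

lemma piece_right {H : ℝ} (hH1 : 1/2 < H) (hH2 : H < 1) (s R : ℝ) (hR : 0 < R) :
    ∫⁻ t in Icc s (s + R), ENNReal.ofReal (|t - s| ^ (2*H-2)) =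
      ENNReal.ofReal (R ^ (2*H-1) / (2*H-1)) := by
  have hr : (-1:ℝ) < 2*H-2 := by linarith
  rw [← setLIntegral_congr (Ioc_ae_eq_Icc (μ := volume) (a := s) (b := s + R))]
  have hcong : ∫⁻ t in Ioc s (s+R), ENNReal.ofReal (|t - s| ^ (2*H-2)) =
      ∫⁻ t in Ioc s (s+R), ENNReal.ofReal ((t - s) ^ (2*H-2)) := by
    refine setLIntegral_congr_fun measurableSet_Ioc (fun t ht => ?_)
    rw [abs_of_nonneg (by linarith [ht.1] : (0:ℝ) ≤ t - s)]
  rw [hcong]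
  have hInt : IntegrableOn (fun t => (t - s) ^ (2*H-2)) (Ioc s (s+R)) volume := by
    have h1 : IntervalIntegrable (fun x : ℝ => x ^ (2*H-2)) volume 0 R :=
      intervalIntegral.intervalIntegrable_rpow' hr
    have h2 := h1.comp_sub_right s
    rw [zero_add] at h2
    have h3 := h2.1
    rwa [add_comm R s] at h3
  rw [← MeasureTheory.ofReal_integral_eq_lintegral_ofReal hInt ?_]
  · congr 1
    rw [← intervalIntegral.integral_of_le (by linarith : s ≤ s + R),
      intervalIntegral.integral_comp_sub_right (fun x => x ^ (2*H-2)) s]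
    simp only [sub_self, add_sub_cancel_left]
    rw [integral_rpow (Or.inl hr), Real.zero_rpow (by linarith : 2*H-2+1 ≠ 0)]
    have h4 : 2*H-2+1 = 2*H-1 := by ring
    rw [h4]
    ring
  · filter_upwards [ae_restrict_mem measurableSet_Ioc] with t ht
    exact Real.rpow_nonneg (by linarith [ht.1]) _

lemma piece_left {H : ℝ} (hH1 : 1/2 < H) (hH2 : H < 1) (s R : ℝ) (hR : 0 < R) :
    ∫⁻ t in Icc (s - R) s, ENNReal.ofReal (|t - s| ^ (2*H-2)) =
      ENNReal.ofReal (R ^ (2*H-1) / (2*H-1)) := by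
  have hr : (-1:ℝ) < 2*H-2 := by linarith
  rw [← setLIntegral_congr (Ico_ae_eq_Icc (μ := volume) (a := s - R) (b := s))]
  have hcong : ∫⁻ t in Ico (s-R) s, ENNReal.ofReal (|t - s| ^ (2*H-2)) =
      ∫⁻ t in Ico (s-R) s, ENNReal.ofReal ((s - t) ^ (2*H-2)) := by
    refine setLIntegral_congr_fun measurableSet_Ico (fun t ht => ?_)
    rw [abs_sub_comm, abs_of_nonneg (by linarith [ht.2] : (0:ℝ) ≤ s - t)]
  rw [hcong]
  rw [← setLIntegral_congr (Ioo_ae_eq_Ico (μ := volume) (a := s - R) (b := s))]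
  have hInt : IntegrableOn (fun t => (s - t) ^ (2*H-2)) (Ioo (s-R) s) volume := by
    have h1 : IntervalIntegrable (fun x : ℝ => x ^ (2*H-2)) volume 0 R :=
      intervalIntegral.intervalIntegrable_rpow' hr
    have h2 := h1.comp_sub_left s
    rw [sub_zero] at h2
    exact (h2.2.mono_set Set.Ioo_subset_Ioc_self)
  rw [← MeasureTheory.ofReal_integral_eq_lintegral_ofReal hInt ?_]
  · congr 1
    rw [← MeasureTheory.integral_Ioc_eq_integral_Ioo,
      ← intervalIntegral.integral_of_le (by linarith : s - R ≤ s),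
      intervalIntegral.integral_comp_sub_left (fun x => x ^ (2*H-2)) s]
    simp only [sub_self, sub_sub_cancel]
    rw [integral_rpow (Or.inl hr), Real.zero_rpow (by linarith : 2*H-2+1 ≠ 0)]
    have h4 : 2*H-2+1 = 2*H-1 := by ring
    rw [h4]
    ring
  · filter_upwards [ae_restrict_mem measurableSet_Ioo] with t ht
    exact Real.rpow_nonneg (by linarith [ht.2]) _


lemma kernel_set {H : ℝ} (hH1 : 1/2 < H) (hH2 : H < 1) (s : ℝ) (F : Set ℝ) :
    ∫⁻ t in F, ENNReal.ofReal (|t - s| ^ (2*H-2)) ≤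
      (ENNReal.ofReal (2/(2*H-1)) + 1) * (volume F) ^ (2*H-1) := by
  set v := volume F with hv
  rcases eq_or_ne v 0 with h0 | h0
  · rw [setLIntegral_measure_zero _ _ h0]
    exact zero_le
  rcases eq_or_ne v ⊤ with htop | htop
  · rw [htop, ENNReal.top_rpow_of_pos (by linarith : (0:ℝ) < 2*H-1), ENNReal.mul_top]
    · exact le_top
    · simp
  set R := v.toReal with hR
  have hRpos : 0 < R := ENNReal.toReal_pos h0 htop
  have hvR : ENNReal.ofReal R = v := ENNReal.ofReal_toReal htop
  have hsub : F ⊆ (F ∩ Icc (s - R) (s + R)) ∪ (F \ Icc (s - R) (s + R)) := by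
    intro t ht
    by_cases h : t ∈ Icc (s - R) (s + R)
    · exact Or.inl ⟨ht, h⟩
    · exact Or.inr ⟨ht, h⟩
  calc ∫⁻ t in F, ENNReal.ofReal (|t - s| ^ (2*H-2))
      ≤ ∫⁻ t in (F ∩ Icc (s - R) (s + R)) ∪ (F \ Icc (s - R) (s + R)),
          ENNReal.ofReal (|t - s| ^ (2*H-2)) := lintegral_mono_set hsub
    _ ≤ (∫⁻ t in F ∩ Icc (s - R) (s + R), ENNReal.ofReal (|t - s| ^ (2*H-2))) +
        ∫⁻ t in F \ Icc (s - R) (s + R), ENNReal.ofReal (|t - s| ^ (2*H-2)) :=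
          lintegral_union_le _ _ _
    _ ≤ ENNReal.ofReal (2/(2*H-1)) * v ^ (2*H-1) + v ^ (2*H-1) := by
        gcongr
        · -- central part
          calc ∫⁻ t in F ∩ Icc (s - R) (s + R), ENNReal.ofReal (|t - s| ^ (2*H-2))
              ≤ ∫⁻ t in Icc (s - R) (s + R), ENNReal.ofReal (|t - s| ^ (2*H-2)) :=
                lintegral_mono_set inter_subset_right
            _ ≤ (∫⁻ t in Icc (s - R) s, ENNReal.ofReal (|t - s| ^ (2*H-2))) +
                ∫⁻ t in Icc s (s + R), ENNReal.ofReal (|t - s| ^ (2*H-2)) := by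
                refine le_trans (lintegral_mono_set ?_) (lintegral_union_le _ _ _)
                intro t ht
                by_cases h : t ≤ s
                · exact Or.inl ⟨ht.1, h⟩
                · exact Or.inr ⟨le_of_not_ge h, ht.2⟩
            _ = ENNReal.ofReal (R ^ (2*H-1) / (2*H-1)) +
                ENNReal.ofReal (R ^ (2*H-1) / (2*H-1)) := by
                rw [piece_left hH1 hH2 s R hRpos, piece_right hH1 hH2 s R hRpos]
            _ = ENNReal.ofReal (2/(2*H-1) * R ^ (2*H-1)) := by
                rw [← ENNReal.ofReal_add (div_nonneg (Real.rpow_nonneg hRpos.le _) (by linarith)) (div_nonneg (Real.rpow_nonneg hRpos.le _) (by linarith))]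
                congr 1
                ring
            _ = ENNReal.ofReal (2/(2*H-1)) * v ^ (2*H-1) := by
                rw [ENNReal.ofReal_mul (div_nonneg two_pos.le (by linarith)), ← hvR,
                  ENNReal.ofReal_rpow_of_pos hRpos]
        · -- tail part
          calc ∫⁻ t in F \ Icc (s - R) (s + R), ENNReal.ofReal (|t - s| ^ (2*H-2))
              ≤ ∫⁻ _t in F \ Icc (s - R) (s + R), ENNReal.ofReal (R ^ (2*H-2)) := by
                refine setLIntegral_mono (by measurability) fun t ht => ?_
                refine ENNReal.ofReal_le_ofReal ?_
                refine Real.rpow_le_rpow_of_nonpos hRpos ?_ (by linarith)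
                have h' := ht.2
                rw [mem_Icc, not_and_or] at h'
                rcases h' with h | h
                · rw [abs_sub_comm, abs_of_pos (by linarith [not_le.mp h] : (0:ℝ) < s - t)]
                  linarith [not_le.mp h]
                · rw [abs_of_pos (by linarith [not_le.mp h] : (0:ℝ) < t - s)]
                  linarith [not_le.mp h]
            _ = ENNReal.ofReal (R ^ (2*H-2)) * volume (F \ Icc (s - R) (s + R)) :=
                setLIntegral_const _ _
            _ ≤ ENNReal.ofReal (R ^ (2*H-2)) * v := by
                gcongr
                exact measure_mono diff_subset
            _ = v ^ (2*H-1) := by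
                have hconv : ENNReal.ofReal (R ^ (2*H-2)) = v ^ (2*H-2) := by
                  rw [← ENNReal.ofReal_rpow_of_pos hRpos, hvR]
                rw [hconv, show (2*H-1 : ℝ) = (2*H-2) + 1 by ring,
                  ENNReal.rpow_add _ _ h0 htop, ENNReal.rpow_one]
    _ = (ENNReal.ofReal (2/(2*H-1)) + 1) * v ^ (2*H-1) := by ring


lemma J_le₁ {H : ℝ} (hH1 : 1/2 < H) (hH2 : H < 1) (E F : Set ℝ) :
    (∫⁻ s in E, ∫⁻ t in F, ker H s t) ≤
      (ENNReal.ofReal (2/(2*H-1)) + 1) * (volume E * (volume F) ^ (2*H-1)) := by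
  simp only [ker]
  calc (∫⁻ s in E, ∫⁻ t in F, ENNReal.ofReal (|t - s| ^ (2*H-2)))
      ≤ ∫⁻ _s in E, (ENNReal.ofReal (2/(2*H-1)) + 1) * (volume F) ^ (2*H-1) :=
        lintegral_mono fun s => kernel_set hH1 hH2 s F
    _ = (ENNReal.ofReal (2/(2*H-1)) + 1) * (volume F) ^ (2*H-1) * volume E :=
        setLIntegral_const _ _
    _ = (ENNReal.ofReal (2/(2*H-1)) + 1) * (volume E * (volume F) ^ (2*H-1)) := by ring

lemma J_le₂ {H : ℝ} (hH1 : 1/2 < H) (hH2 : H < 1) (E F : Set ℝ) :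
    (∫⁻ s in E, ∫⁻ t in F, ker H s t) ≤
      (ENNReal.ofReal (2/(2*H-1)) + 1) * ((volume E) ^ (2*H-1) * volume F) := by
  simp only [ker]
  have hswap : (∫⁻ s in E, ∫⁻ t in F, ENNReal.ofReal (|t - s| ^ (2*H-2))) =
      ∫⁻ t in F, ∫⁻ s in E, ENNReal.ofReal (|t - s| ^ (2*H-2)) := by
    exact lintegral_lintegral_swap ((ker_meas H).aemeasurable)
  rw [hswap]
  calc (∫⁻ t in F, ∫⁻ s in E, ENNReal.ofReal (|t - s| ^ (2*H-2)))
      ≤ ∫⁻ _t in F, (ENNReal.ofReal (2/(2*H-1)) + 1) * (volume E) ^ (2*H-1) := by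
        refine lintegral_mono fun t => ?_
        have : ∀ s, ENNReal.ofReal (|t - s| ^ (2*H-2)) = ENNReal.ofReal (|s - t| ^ (2*H-2)) := by
          intro s; rw [abs_sub_comm]
        rw [lintegral_congr this]
        exact kernel_set hH1 hH2 t E
    _ = (ENNReal.ofReal (2/(2*H-1)) + 1) * (volume E) ^ (2*H-1) * volume F :=
        setLIntegral_const _ _
    _ = (ENNReal.ofReal (2/(2*H-1)) + 1) * ((volume E) ^ (2*H-1) * volume F) := by ring


end HLSAux

open HLSAux Set
open scoped ENNReal

/-- **Hardy–Littlewood–Sobolev inequality** (embedding of `L^{1/H}([0,T])` into the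
Hilbert space of fractional Brownian motion with Hurst parameter `H > 1/2`).
Fix `H ∈ (1/2, 1)`. There is a constant `C > 0`, depending only on `H`, such that for every
`T > 0` and every measurable `f : ℝ → ℝ` vanishing outside `[0, T]` with
`∫_0^T |f|^{1/H} < ∞`, one has
`H(2H-1) ∫∫ |t-s|^{2H-2} |f(s)| |f(t)| ds dt ≤ C (∫_0^T |f(s)|^{1/H} ds)^{2H}`. -/
theorem hardy_littlewood_sobolev (H : ℝ) (hH1 : 1 / 2 < H) (hH2 : H < 1) :
    ∃ C > 0, ∀ T > (0 : ℝ), ∀ f : ℝ → ℝ, Measurable f →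
      (∀ s, s ∉ Set.Icc (0 : ℝ) T → f s = 0) →
      (∫⁻ s in Set.Icc (0 : ℝ) T, ENNReal.ofReal (|f s| ^ (1 / H))) < ⊤ →
      (∫⁻ s : ℝ, ∫⁻ t : ℝ,
          ENNReal.ofReal (H * (2 * H - 1) * |t - s| ^ (2 * H - 2) * |f s| * |f t|))
        ≤ ENNReal.ofReal (C * (∫ s in Set.Icc (0 : ℝ) T, |f s| ^ (1 / H)) ^ (2 * H)) := by
  have hH0 : (0:ℝ) < H := by linarith
  have h2H1 : (0:ℝ) < 2*H-1 := by linarith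
  set p : ℝ := 1/H with hp
  have hp1 : 1 < p := by
    rw [hp, lt_div_iff₀ hH0, one_mul]; exact hH2
  set c1 : ℝ≥0∞ := ENNReal.ofReal (2/(2*H-1)) + 1 with hc1
  have hc1top : c1 ≠ ⊤ := by
    rw [hc1]
    exact ENNReal.add_ne_top.mpr ⟨ENNReal.ofReal_ne_top, ENNReal.one_ne_top⟩
  set δ : ℝ≥0∞ := (2:ℝ≥0∞) ^ (1-p) with hδ
  have hδ1 : δ < 1 := ENNReal.rpow_lt_one_of_one_lt_of_neg (by norm_num) (by linarith)
  have hgeo : (1 - δ)⁻¹ ≠ ⊤ := by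
    rw [Ne, ENNReal.inv_eq_top, tsub_eq_zero_iff_le]
    exact not_le.mpr hδ1
  set K : ℝ≥0∞ := 8 * c1 * (1-δ)⁻¹ with hK
  have hKtop : K ≠ ⊤ := by
    rw [hK]
    exact ENNReal.mul_ne_top (ENNReal.mul_ne_top (by norm_num) hc1top) hgeo
  refine ⟨K.toReal + 1, by positivity, ?_⟩
  intro T hT f hf hzero hfin
  set C : ℝ := K.toReal + 1 with hC
  set N : ℝ≥0∞ := ∫⁻ s in Icc (0:ℝ) T, ENNReal.ofReal (|f s| ^ p) with hN
  -- dyadic decomposition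
  set E : ℤ → Set ℝ := fun k => {s : ℝ | (2:ℝ)^k < |f s|} ∩ {s : ℝ | |f s| ≤ (2:ℝ)^(k+1)} with hE
  have hEmeas : ∀ k, MeasurableSet (E k) := fun k =>
    (measurableSet_lt measurable_const hf.abs).inter (measurableSet_le hf.abs measurable_const)
  have hEsub : ∀ k, E k ⊆ Icc (0:ℝ) T := by
    intro k s hs
    by_contra hc
    have h0 : f s = 0 := hzero s hc
    have h2 : (0:ℝ) < (2:ℝ)^k := zpow_pos two_pos k
    have h3 : (2:ℝ)^k < |f s| := hs.1
    rw [h0, abs_zero] at h3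
    linarith
  have hEdisj : Pairwise (Function.onFun Disjoint E) := by
    intro j k hjk
    rw [Function.onFun, Set.disjoint_left]
    rintro s ⟨hs1, hs2⟩ ⟨hs3, hs4⟩
    simp only [mem_setOf_eq] at hs1 hs2 hs3 hs4
    rcases lt_or_gt_of_ne hjk with h | h
    · have : (2:ℝ)^(j+1) ≤ (2:ℝ)^k := zpow_le_zpow_right₀ one_le_two (by omega)
      linarith
    · have : (2:ℝ)^(k+1) ≤ (2:ℝ)^j := zpow_le_zpow_right₀ one_le_two (by omega)
      linarith
  set v : ℤ → ℝ≥0∞ := fun k => volume (E k) with hv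
  set w : ℤ → ℝ≥0∞ := fun m => (2:ℝ≥0∞) ^ (m:ℝ) with hw
  set X : ℤ → ℝ≥0∞ := fun k => (2:ℝ≥0∞) ^ ((k:ℝ)*p) * v k with hX
  set e : ℤ → ℝ → ℝ≥0∞ := fun k => (E k).indicator (fun _ => w (k+1)) with he
  set S : ℝ≥0∞ := ∑' k : ℤ, X k with hS
  have hwtop : ∀ m : ℤ, w m ≠ ⊤ := fun m => two_rpow_ne_top _
  have he_ne_top : ∀ k s, e k s ≠ ⊤ := by
    intro k s
    simp only [he]
    by_cases hs : s ∈ E k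
    · rw [Set.indicator_of_mem hs]; exact hwtop _
    · rw [Set.indicator_of_notMem hs]; exact ENNReal.zero_ne_top
  -- pointwise domination
  have hpoint : ∀ s : ℝ, ENNReal.ofReal |f s| ≤ ∑' k : ℤ, e k s := by
    intro s
    rcases eq_or_lt_of_le (abs_nonneg (f s)) with h0 | h0
    · rw [← h0]; simp
    · obtain ⟨k, hk⟩ := _root_.exists_mem_Ioc_zpow h0 one_lt_two
      refine le_trans ?_ (ENNReal.le_tsum k)
      have hs : s ∈ E k := ⟨hk.1, hk.2⟩
      simp only [he]
      rw [Set.indicator_of_mem hs]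
      calc ENNReal.ofReal |f s| ≤ ENNReal.ofReal ((2:ℝ)^(k+1)) := ENNReal.ofReal_le_ofReal hk.2
        _ = w (k+1) := by simp only [hw]; exact two_conv (k+1)
  -- Chebyshev
  have hfmeas_p : Measurable fun s : ℝ => ENNReal.ofReal (|f s| ^ p) :=
    ((meas_rpow_const p).comp hf.abs).ennreal_ofReal
  have hXle : ∀ k : ℤ, X k ≤ ∫⁻ s in E k, ENNReal.ofReal (|f s| ^ p) := by
    intro k
    have hconst : (2:ℝ≥0∞) ^ ((k:ℝ)*p) = ENNReal.ofReal (((2:ℝ)^k) ^ p) := by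
      rw [← ENNReal.ofReal_rpow_of_pos (zpow_pos two_pos k), two_conv k, ← ENNReal.rpow_mul]
    calc X k = (2:ℝ≥0∞) ^ ((k:ℝ)*p) * volume (E k) := by simp only [hX, hv]
      _ = ∫⁻ _s in E k, (2:ℝ≥0∞) ^ ((k:ℝ)*p) := (setLIntegral_const _ _).symm
      _ ≤ ∫⁻ s in E k, ENNReal.ofReal (|f s| ^ p) := by
          refine setLIntegral_mono hfmeas_p fun s hs => ?_
          rw [hconst]
          exact ENNReal.ofReal_le_ofReal
            (Real.rpow_le_rpow (zpow_pos two_pos k).le hs.1.le (by positivity))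
  have hcheb : S ≤ N := by
    calc S ≤ ∑' k : ℤ, ∫⁻ s in E k, ENNReal.ofReal (|f s| ^ p) := ENNReal.tsum_le_tsum hXle
      _ = ∫⁻ s in ⋃ k, E k, ENNReal.ofReal (|f s| ^ p) := (lintegral_iUnion hEmeas hEdisj _).symm
      _ ≤ N := lintegral_mono_set (iUnion_subset hEsub)
  -- the double sum
  set F : ℤ × ℤ → ℝ → ℝ → ℝ≥0∞ := fun q s t => e q.1 s * e q.2 t * ker H s t with hF
  set Φ : ℤ × ℤ → ℝ≥0∞ :=
    fun q => w (q.1+1) * w (q.2+1) * ∫⁻ s in E q.1, ∫⁻ t in E q.2, ker H s t with hΦ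
  have hFmeas : ∀ q : ℤ×ℤ, Measurable fun z : ℝ × ℝ => F q z.1 z.2 := by
    intro q
    simp only [hF, he]
    refine Measurable.mul (Measurable.mul ?_ ?_) (ker_meas H)
    · exact (measurable_const.indicator (hEmeas q.1)).comp measurable_fst
    · exact (measurable_const.indicator (hEmeas q.2)).comp measurable_snd
  have hpt : ∀ s t : ℝ, ker H s t * ENNReal.ofReal |f s| * ENNReal.ofReal |f t| ≤
      ∑' q : ℤ×ℤ, F q s t := by
    intro s t
    have hprod : (∑' q : ℤ×ℤ, F q s t) = (∑' j : ℤ, e j s) * (∑' j : ℤ, e j t) * ker H s t := by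
      rw [ENNReal.tsum_prod']
      calc (∑' j : ℤ, ∑' k : ℤ, F (j,k) s t)
          = ∑' j : ℤ, e j s * ((∑' k : ℤ, e k t) * ker H s t) := by
            refine tsum_congr fun j => ?_
            rw [← ENNReal.tsum_mul_right, ← ENNReal.tsum_mul_left]
            exact tsum_congr fun k => by simp only [hF]; ring
        _ = (∑' j : ℤ, e j s) * ((∑' k : ℤ, e k t) * ker H s t) := ENNReal.tsum_mul_right
        _ = (∑' j : ℤ, e j s) * (∑' j : ℤ, e j t) * ker H s t := by ring
    rw [hprod]
    calc ker H s t * ENNReal.ofReal |f s| * ENNReal.ofReal |f t|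
        = ENNReal.ofReal |f s| * ENNReal.ofReal |f t| * ker H s t := by ring
      _ ≤ (∑' j : ℤ, e j s) * (∑' j : ℤ, e j t) * ker H s t := by
          gcongr
          exacts [hpoint s, hpoint t]
  have hQ : (∫⁻ s : ℝ, ∫⁻ t : ℝ, ker H s t * ENNReal.ofReal |f s| * ENNReal.ofReal |f t|) ≤
      ∑' q : ℤ×ℤ, Φ q := by
    calc (∫⁻ s : ℝ, ∫⁻ t : ℝ, ker H s t * ENNReal.ofReal |f s| * ENNReal.ofReal |f t|)
        ≤ ∫⁻ s : ℝ, ∫⁻ t : ℝ, ∑' q : ℤ×ℤ, F q s t :=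
          lintegral_mono fun s => lintegral_mono fun t => hpt s t
      _ = ∫⁻ s : ℝ, ∑' q : ℤ×ℤ, ∫⁻ t : ℝ, F q s t := by
          refine lintegral_congr fun s => ?_
          exact lintegral_tsum fun q => ((hFmeas q).comp measurable_prodMk_left).aemeasurable
      _ = ∑' q : ℤ×ℤ, ∫⁻ s : ℝ, ∫⁻ t : ℝ, F q s t :=
          lintegral_tsum fun q => ((hFmeas q).lintegral_prod_right').aemeasurable
      _ = ∑' q : ℤ×ℤ, Φ q := by
          refine tsum_congr fun q => ?_
          have inner1 : ∀ s, (∫⁻ t : ℝ, F q s t) =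
              e q.1 s * (w (q.2+1) * ∫⁻ t in E q.2, ker H s t) := by
            intro s
            simp only [hF, mul_assoc]
            rw [lintegral_const_mul' _ _ (he_ne_top q.1 s)]
            congr 1
            have hind : ∀ t, e q.2 t * ker H s t =
                (E q.2).indicator (fun t => w (q.2+1) * ker H s t) t := by
              intro t
              by_cases ht : t ∈ E q.2
              · simp only [he, Set.indicator_of_mem ht]
              · simp only [he, Set.indicator_of_notMem ht, zero_mul]
            rw [lintegral_congr hind, lintegral_indicator (hEmeas q.2),
              lintegral_const_mul' _ _ (hwtop _)]
          rw [lintegral_congr inner1]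
          have inner2 : ∀ s, e q.1 s * (w (q.2+1) * ∫⁻ t in E q.2, ker H s t) =
              (E q.1).indicator (fun s => w (q.1+1) * (w (q.2+1) * ∫⁻ t in E q.2, ker H s t)) s := by
            intro s
            by_cases hs : s ∈ E q.1
            · simp only [he, Set.indicator_of_mem hs]
            · simp only [he, Set.indicator_of_notMem hs, zero_mul]
          rw [lintegral_congr inner2, lintegral_indicator (hEmeas q.1),
            lintegral_const_mul' _ _ (hwtop _), lintegral_const_mul' _ _ (hwtop _)]
          simp only [hΦ]
          ring
  -- exponent bookkeeping
  have hmul2 : ∀ a b : ℝ, (2:ℝ≥0∞)^a * (2:ℝ≥0∞)^b = 2^(a+b) :=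
    fun a b => (ENNReal.rpow_add a b (by norm_num) (by norm_num)).symm
  have hgroup : ∀ (a1 a2 a3 : ℝ) (u1 u2 : ℝ≥0∞),
      ((2:ℝ≥0∞)^a1 * u1) * ((2:ℝ≥0∞)^a2 * u2) * (2:ℝ≥0∞)^a3 = 2^(a1+a2+a3) * (u1 * u2) := by
    intro a1 a2 a3 u1 u2
    rw [← hmul2, ← hmul2]
    ring
  have hwv : ∀ (kk : ℤ) (d : ℕ),
      X (kk+d) * (X kk) ^ (2*H-1) * δ^d =
        w (kk+d) * w kk * (v (kk+d) * (v kk) ^ (2*H-1)) := by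
    intro kk d
    calc X (kk+d) * (X kk)^(2*H-1) * δ^d
        = ((2:ℝ≥0∞)^(((kk+d:ℤ):ℝ)*p) * v (kk+d)) *
            ((2:ℝ≥0∞)^(((kk:ℝ)*p)*(2*H-1)) * (v kk)^(2*H-1)) * (2:ℝ≥0∞)^((1-p)*(d:ℝ)) := by
          simp only [hX, hδ]
          rw [ENNReal.mul_rpow_of_nonneg _ _ (le_of_lt h2H1), ← ENNReal.rpow_mul,
            ← ENNReal.rpow_natCast ((2:ℝ≥0∞)^(1-p)) d, ← ENNReal.rpow_mul]
      _ = (2:ℝ≥0∞)^(((kk+d:ℤ):ℝ)*p + ((kk:ℝ)*p)*(2*H-1) + (1-p)*(d:ℝ)) *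
            (v (kk+d) * (v kk)^(2*H-1)) := hgroup _ _ _ _ _
      _ = (2:ℝ≥0∞)^(((kk+d:ℤ):ℝ) + (kk:ℝ)) * (v (kk+d) * (v kk)^(2*H-1)) := by
          congr 2
          push_cast
          rw [hp]
          field_simp
          ring
      _ = w (kk+d) * w kk * (v (kk+d) * (v kk)^(2*H-1)) := by
          simp only [hw]
          rw [← hmul2]
  have hwsucc : ∀ m : ℤ, w (m+1) = 2 * w m := by
    intro m
    simp only [hw]
    rw [show ((m+1:ℤ):ℝ) = (m:ℝ) + 1 by push_cast; ring,
      ENNReal.rpow_add _ _ (by norm_num) (by norm_num), ENNReal.rpow_one]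
    ring
  have htermL : ∀ (kk : ℤ) (d : ℕ),
      Φ (kk + d, kk) ≤ 4 * c1 * (X (kk+d) * (X kk)^(2*H-1) * δ^d) := by
    intro kk d
    calc Φ (kk+d, kk)
        = w (kk+d+1) * w (kk+1) * ∫⁻ s in E (kk+d), ∫⁻ t in E kk, ker H s t := by
          simp only [hΦ]
      _ ≤ w (kk+d+1) * w (kk+1) * (c1 * (v (kk+d) * (v kk)^(2*H-1))) := by
          gcongr
          exact J_le₁ hH1 hH2 _ _
      _ = 4 * c1 * (w (kk+d) * w kk * (v (kk+d) * (v kk)^(2*H-1))) := by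
          rw [hwsucc, hwsucc]; ring
      _ = 4 * c1 * (X (kk+d) * (X kk)^(2*H-1) * δ^d) := by rw [hwv]
  have htermR : ∀ (kk : ℤ) (d : ℕ),
      Φ (kk, kk + d) ≤ 4 * c1 * (X (kk+d) * (X kk)^(2*H-1) * δ^d) := by
    intro kk d
    calc Φ (kk, kk+d)
        = w (kk+1) * w (kk+d+1) * ∫⁻ s in E kk, ∫⁻ t in E (kk+d), ker H s t := by
          simp only [hΦ]
      _ ≤ w (kk+1) * w (kk+d+1) * (c1 * ((v kk)^(2*H-1) * v (kk+d))) := by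
          gcongr
          exact J_le₂ hH1 hH2 _ _
      _ = 4 * c1 * (w (kk+d) * w kk * (v (kk+d) * (v kk)^(2*H-1))) := by
          rw [hwsucc, hwsucc]; ring
      _ = 4 * c1 * (X (kk+d) * (X kk)^(2*H-1) * δ^d) := by rw [hwv]
  -- splitting the double sum
  have hsplit : (∑' q : ℤ×ℤ, Φ q) ≤
      (∑' a : ℕ × ℤ, Φ (a.2 + a.1, a.2)) + ∑' a : ℕ × ℤ, Φ (a.2, a.2 + a.1) := by
    have hdecomp : ∀ q : ℤ×ℤ, Φ q =
        (if q.2 ≤ q.1 then Φ q else 0) + (if q.1 < q.2 then Φ q else 0) := by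
      intro q
      by_cases h : q.2 ≤ q.1
      · rw [if_pos h, if_neg (not_lt.mpr h), add_zero]
      · rw [if_neg h, if_pos (not_le.mp h), zero_add]
    have step1 : (∑' q : ℤ×ℤ, Φ q) =
        (∑' q : ℤ×ℤ, (if q.2 ≤ q.1 then Φ q else 0)) +
          ∑' q : ℤ×ℤ, (if q.1 < q.2 then Φ q else 0) := by
      rw [← ENNReal.tsum_add]; exact tsum_congr hdecomp
    rw [step1]
    refine add_le_add ?_ ?_
    · have hinj : Function.Injective (fun a : ℕ × ℤ => ((a.2 + a.1, a.2) : ℤ×ℤ)) := by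
        intro a b hab
        simp only [Prod.mk.injEq] at hab
        obtain ⟨h1, h2⟩ := hab
        have h3 : a.1 = b.1 := by omega
        exact Prod.ext h3 h2
      have hsupp : Function.support (fun q : ℤ×ℤ => if q.2 ≤ q.1 then Φ q else 0) ⊆
          Set.range (fun a : ℕ × ℤ => ((a.2 + a.1, a.2) : ℤ×ℤ)) := by
        intro q hq
        have h : q.2 ≤ q.1 := by
          by_contra hc
          exact hq (by simp [if_neg hc])
        refine ⟨((q.1 - q.2).toNat, q.2), ?_⟩
        have h4 : q.2 + (((q.1 - q.2).toNat : ℤ)) = q.1 := by omega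
        simp only [h4]
      rw [← hinj.tsum_eq hsupp]
      refine ENNReal.tsum_le_tsum fun a => ?_
      by_cases h : (a.2 : ℤ) ≤ a.2 + a.1
      · rw [if_pos h]
      · rw [if_neg h]; exact zero_le
    · have hinj : Function.Injective (fun a : ℕ × ℤ => ((a.2, a.2 + a.1) : ℤ×ℤ)) := by
        intro a b hab
        simp only [Prod.mk.injEq] at hab
        obtain ⟨h2, h1⟩ := hab
        have h3 : a.1 = b.1 := by omega
        exact Prod.ext h3 h2
      have hsupp : Function.support (fun q : ℤ×ℤ => if q.1 < q.2 then Φ q else 0) ⊆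
          Set.range (fun a : ℕ × ℤ => ((a.2, a.2 + a.1) : ℤ×ℤ)) := by
        intro q hq
        have h : q.1 < q.2 := by
          by_contra hc
          exact hq (by simp [if_neg hc])
        refine ⟨((q.2 - q.1).toNat, q.1), ?_⟩
        have h4 : q.1 + (((q.2 - q.1).toNat : ℤ)) = q.2 := by omega
        simp only [h4]
      rw [← hinj.tsum_eq hsupp]
      refine ENNReal.tsum_le_tsum fun a => ?_
      by_cases h : (a.2 : ℤ) < a.2 + a.1
      · rw [if_pos h]
      · rw [if_neg h]; exact zero_le
  -- summing the bounds
  have hSS : S * S^(2*H-1) = S^(2*H) := by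
    nth_rewrite 1 [← ENNReal.rpow_one S]
    rw [← ENNReal.rpow_add_of_nonneg _ _ zero_le_one (by linarith)]
    congr 1
    ring
  have hhalf : (∑' a : ℕ × ℤ, X (a.2 + a.1) * (X a.2)^(2*H-1) * δ^a.1) ≤
      (1-δ)⁻¹ * S^(2*H) := by
    rw [ENNReal.tsum_prod']
    have hinner : ∀ d : ℕ, (∑' kk : ℤ, X (kk + d) * (X kk)^(2*H-1) * δ^d) ≤ δ^d * S^(2*H) := by
      intro d
      calc (∑' kk : ℤ, X (kk + d) * (X kk)^(2*H-1) * δ^d)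
          ≤ ∑' kk : ℤ, X (kk + d) * S^(2*H-1) * δ^d := by
            refine ENNReal.tsum_le_tsum fun kk => ?_
            gcongr
            rw [hS]
            exact ENNReal.le_tsum kk
        _ = (∑' kk : ℤ, X (kk + d)) * (S^(2*H-1) * δ^d) := by
            rw [← ENNReal.tsum_mul_right]
            exact tsum_congr fun kk => by ring
        _ = S * (S^(2*H-1) * δ^d) := by
            congr 1
            simpa using (Equiv.addRight (d:ℤ)).tsum_eq X
        _ = δ^d * (S * S^(2*H-1)) := by ring
        _ = δ^d * S^(2*H) := by rw [hSS]
    calc (∑' d : ℕ, ∑' kk : ℤ, X (kk + d) * (X kk)^(2*H-1) * δ^d)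
        ≤ ∑' d : ℕ, δ^d * S^(2*H) := ENNReal.tsum_le_tsum hinner
      _ = (∑' d : ℕ, δ^d) * S^(2*H) := ENNReal.tsum_mul_right
      _ = (1-δ)⁻¹ * S^(2*H) := by rw [ENNReal.tsum_geometric]
  have hmain : (∑' q : ℤ×ℤ, Φ q) ≤ K * S^(2*H) := by
    calc (∑' q : ℤ×ℤ, Φ q)
        ≤ (∑' a : ℕ × ℤ, Φ (a.2 + a.1, a.2)) + ∑' a : ℕ × ℤ, Φ (a.2, a.2 + a.1) := hsplit
      _ ≤ (∑' a : ℕ × ℤ, 4 * c1 * (X (a.2 + a.1) * (X a.2)^(2*H-1) * δ^a.1)) +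
          ∑' a : ℕ × ℤ, 4 * c1 * (X (a.2 + a.1) * (X a.2)^(2*H-1) * δ^a.1) := by
          refine add_le_add (ENNReal.tsum_le_tsum fun a => htermL a.2 a.1)
            (ENNReal.tsum_le_tsum fun a => htermR a.2 a.1)
      _ = 8 * c1 * ∑' a : ℕ × ℤ, (X (a.2 + a.1) * (X a.2)^(2*H-1) * δ^a.1) := by
          simp only [ENNReal.tsum_mul_left]
          ring
      _ ≤ 8 * c1 * ((1-δ)⁻¹ * S^(2*H)) := mul_le_mul_right hhalf _
      _ = K * S^(2*H) := by rw [hK]; ring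
  -- conclusion
  have hstepA : (∫⁻ s : ℝ, ∫⁻ t : ℝ,
      ENNReal.ofReal (H * (2*H-1) * |t - s| ^ (2*H-2) * |f s| * |f t|))
      ≤ ∫⁻ s : ℝ, ∫⁻ t : ℝ, ker H s t * ENNReal.ofReal |f s| * ENNReal.ofReal |f t| := by
    refine lintegral_mono fun s => lintegral_mono fun t => ?_
    have hk0 : (0:ℝ) ≤ |t-s| ^ (2*H-2) := Real.rpow_nonneg (abs_nonneg _) _
    have hle : H * (2*H-1) * |t - s| ^ (2*H-2) * |f s| * |f t| ≤
        |t - s| ^ (2*H-2) * |f s| * |f t| := by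
      have h1 : H * (2*H-1) ≤ H := by nlinarith
      have h1' : H * (2*H-1) ≤ 1 := by linarith
      have h2 : (0:ℝ) ≤ |t - s| ^ (2*H-2) * |f s| * |f t| := by positivity
      nlinarith [mul_nonneg (by linarith : (0:ℝ) ≤ 1 - H*(2*H-1)) h2]
    calc ENNReal.ofReal (H * (2*H-1) * |t - s| ^ (2*H-2) * |f s| * |f t|)
        ≤ ENNReal.ofReal (|t - s| ^ (2*H-2) * |f s| * |f t|) := ENNReal.ofReal_le_ofReal hle
      _ = ker H s t * ENNReal.ofReal |f s| * ENNReal.ofReal |f t| := by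
          rw [ENNReal.ofReal_mul (by positivity), ENNReal.ofReal_mul hk0]
          rfl
  have hNtop : N ≠ ⊤ := hfin.ne
  have hreal : (∫ s in Icc (0:ℝ) T, |f s| ^ p) = N.toReal := by
    rw [hN, MeasureTheory.integral_eq_lintegral_of_nonneg_ae]
    · exact Filter.Eventually.of_forall fun s => Real.rpow_nonneg (abs_nonneg _) _
    · exact ((meas_rpow_const p).comp hf.abs).aestronglyMeasurable
  rw [hreal]
  have hRHS : ENNReal.ofReal (C * N.toReal ^ (2*H)) = ENNReal.ofReal C * N^(2*H) := by
    rw [ENNReal.ofReal_mul (by positivity),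
      ← ENNReal.ofReal_rpow_of_nonneg ENNReal.toReal_nonneg (by linarith : (0:ℝ) ≤ 2*H),
      ENNReal.ofReal_toReal hNtop]
  rw [hRHS]
  calc (∫⁻ s : ℝ, ∫⁻ t : ℝ,
      ENNReal.ofReal (H * (2*H-1) * |t - s| ^ (2*H-2) * |f s| * |f t|))
      ≤ ∫⁻ s : ℝ, ∫⁻ t : ℝ, ker H s t * ENNReal.ofReal |f s| * ENNReal.ofReal |f t| := hstepA
    _ ≤ ∑' q : ℤ×ℤ, Φ q := hQ
    _ ≤ K * S^(2*H) := hmain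
    _ ≤ K * N^(2*H) := mul_le_mul_right (ENNReal.rpow_le_rpow hcheb (by linarith)) _
    _ ≤ ENNReal.ofReal C * N^(2*H) := by
        refine mul_le_mul_left ?_ _
        rw [hC]
        calc K = ENNReal.ofReal K.toReal := (ENNReal.ofReal_toReal hKtop).symm
          _ ≤ ENNReal.ofReal (K.toReal + 1) := ENNReal.ofReal_le_ofReal (by linarith)
end
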